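/- arXiv:2202.11624 — 6 statements merged into one kernel-verified Lean document; each statement's English description precedes it below -/
import Mathlib

section
/- Let α ∈ ℝ satisfy π/(n+1) < α < π/n for some integer n ≥ 2. Define β = (1/2 + m)α - π where m is the minimal nonnegative integer such that this expression is nonnegative. Then β ≠ α/2. -/
open Real

theorem stmt_5 (α : ℝ) (n : ℕ) (hn : 2 ≤ n)
    (hlow : Real.pi / (n + 1) < α) (hhigh : α < Real.pi / n)
    (m : ℕ) (hm : 0 ≤ (1 / 2 + (m : ℝ)) * α - Real.pi)
    (hmin : ∀ j : ℕ, j < m → (1 / 2 + (j : ℝ)) * α - Real.pi < 0) :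
    (1 / 2 + (m : ℝ)) * α - Real.pi ≠ α / 2 := by
  intro h
  have hmα : (m : ℝ) * α = Real.pi := by ring_nf; ring_nf at h; linarith
  have hn1 : (0:ℝ) < (n:ℝ) + 1 := by positivity
  have hn0 : (0:ℝ) < (n:ℝ) := by exact_mod_cast Nat.lt_of_lt_of_le Nat.zero_lt_two hn
  have hα : 0 < α := lt_trans (by positivity) hlow
  have h1 : Real.pi < α * ((n:ℝ) + 1) := by
    have := (div_lt_iff₀ hn1).mp hlow
    linarith
  have h2 : α * (n:ℝ) < Real.pi := by
    have := (lt_div_iff₀ hn0).mp hhigh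
    linarith
  have hgt : (n:ℝ) < (m:ℝ) := by
    rw [← hmα] at h2
    exact lt_of_mul_lt_mul_right (by linarith [mul_comm α (n:ℝ)]) hα.le
  have hlt : (m:ℝ) < (n:ℝ) + 1 := by
    rw [← hmα] at h1
    exact lt_of_mul_lt_mul_right (by linarith [mul_comm α ((n:ℝ)+1)]) hα.le
  have : (n:ℕ) < m := by exact_mod_cast hgt
  have : (m:ℕ) < n + 1 := by exact_mod_cast (by push_cast; exact hlt : (m:ℝ) < ((n+1:ℕ):ℝ))
  omega
end

section
/- Let g : [a,b] → ℝ be a C² function with Lipschitz second derivative such that g(a) = g(b) = R for some R > 0, g(x) < R for all x ∈ (a,b), and g''(x) ≥ δ for all x ∈ (a,b) with δ > 0. Then there exist constants C, C' > 0 depending only on R, δ and the C^{2,1}-norm of g, such that if |g'(a)| is sufficiently small compared to δ, then C'|g'(a)| < b - a < C|g'(a)|. -/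
set_option maxHeartbeats 1000000

theorem stmt_6 (R δ L M : ℝ) (hR : 0 < R) (hδ : 0 < δ) (hL : 0 ≤ L) (hM : 0 ≤ M) :
    ∃ C C' ε : ℝ, 0 < C ∧ 0 < C' ∧ 0 < ε ∧
      ∀ (a b : ℝ) (g g' g'' : ℝ → ℝ), a < b →
        (∀ x ∈ Set.Icc a b, HasDerivAt g (g' x) x) →
        (∀ x ∈ Set.Icc a b, HasDerivAt g' (g'' x) x) →
        LipschitzOnWith (Real.toNNReal L) g'' (Set.Icc a b) →
        (∀ x ∈ Set.Icc a b, |g x| ≤ M ∧ |g' x| ≤ M ∧ |g'' x| ≤ M) →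
        g a = R → g b = R →
        (∀ x ∈ Set.Ioo a b, g x < R) →
        (∀ x ∈ Set.Ioo a b, δ ≤ g'' x) →
        |g' a| < ε →
        C' * |g' a| < b - a ∧ b - a < C * |g' a| := by
  refine ⟨3 / δ, 1 / (M + 1), 1, by positivity, by positivity, one_pos, ?_⟩
  intro a b g g' g'' hab hg hg' hLip hbd hga hgb hint hconv _
  have hIooIcc : Set.Ioo a b ⊆ Set.Icc a b := Set.Ioo_subset_Icc_self
  -- continuity
  have hgc : ContinuousOn g (Set.Icc a b) := fun x hx => (hg x hx).continuousAt.continuousWithinAt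
  have hg'c : ContinuousOn g' (Set.Icc a b) :=
    fun x hx => (hg' x hx).continuousAt.continuousWithinAt
  -- Rolle: a critical point c
  obtain ⟨c, hc, hgc0⟩ := exists_hasDerivAt_eq_zero hab hgc (hga.trans hgb.symm)
    (fun x hx => hg x (hIooIcc hx))
  -- MVT on [a,c] for g'
  have hac : a < c := hc.1
  have hcb : c < b := hc.2
  have hIccac : Set.Icc a c ⊆ Set.Icc a b := Set.Icc_subset_Icc le_rfl hcb.le
  obtain ⟨d, hd, hdslope⟩ := exists_hasDerivAt_eq_slope g' g'' hac
    (hg'c.mono hIccac) (fun x hx => hg' x ⟨hx.1.le, hx.2.le.trans hcb.le⟩)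
  have hdIoo : d ∈ Set.Ioo a b := ⟨hd.1, hd.2.trans hcb⟩
  have hδd : δ ≤ g'' d := hconv d hdIoo
  have hMd : g'' d ≤ M := (abs_le.mp (hbd d (hIooIcc hdIoo)).2.2).2
  -- -g' a = g'' d * (c - a)
  have hcane : c - a ≠ 0 := sub_ne_zero.mpr hac.ne'
  have hkey : -g' a = g'' d * (c - a) := by
    rw [hdslope, div_mul_cancel₀ _ hcane, hgc0, zero_sub]
  have hca : 0 < c - a := by linarith
  have hga' : g' a < 0 := by nlinarith
  have habs : |g' a| = -g' a := abs_of_neg hga'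
  -- monotonicity of g'
  have hg'mono : MonotoneOn g' (Set.Icc a b) := by
    refine monotoneOn_of_hasDerivWithinAt_nonneg (convex_Icc a b) hg'c (f' := g'') ?_ ?_
    · rw [interior_Icc]
      exact fun x hx => (hg' x (hIooIcc hx)).hasDerivWithinAt
    · rw [interior_Icc]
      exact fun x hx => le_trans hδ.le (hconv x hx)
  -- ψ x = g x - g a - g' a * (x - a) is monotone on [a,b]
  have hψ : MonotoneOn (fun x => g x - g a - g' a * (x - a)) (Set.Icc a b) := by
    refine monotoneOn_of_hasDerivWithinAt_nonneg (convex_Icc a b)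
      ((hgc.sub continuousOn_const).sub (continuousOn_const.mul
        (continuousOn_id.sub continuousOn_const))) (f' := fun x => g' x - g' a) ?_ ?_
    · rw [interior_Icc]
      intro x hx
      have : HasDerivAt (fun x => g x - g a - g' a * (x - a)) (g' x - g' a) x := by
        have h1 : HasDerivAt (fun x => g' a * (x - a)) (g' a) x := by
          simpa using ((hasDerivAt_id x).sub_const a).const_mul (g' a)
        exact ((hg x (hIooIcc hx)).sub_const (g a)).sub h1
      exact this.hasDerivWithinAt
    · rw [interior_Icc]
      intro x hx
      have h := hg'mono (Set.left_mem_Icc.mpr hab.le) (hIooIcc hx) hx.1.le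
      show 0 ≤ g' x - g' a
      linarith
  -- hence g c ≥ R + g' a * (c - a)
  have hgclow : R + g' a * (c - a) ≤ g c := by
    have := hψ (Set.left_mem_Icc.mpr hab.le) (hIooIcc hc) hac.le
    simp only [hga] at this ⊢
    linarith
  -- φ x = g x - δ * (x - c)^2 / 2 monotone on [c,b]
  have hIcccb : Set.Icc c b ⊆ Set.Icc a b := Set.Icc_subset_Icc hac.le le_rfl
  have hφ : MonotoneOn (fun x => g x - δ * (x - c) ^ 2 / 2) (Set.Icc c b) := by
    refine monotoneOn_of_hasDerivWithinAt_nonneg (convex_Icc c b)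
      ((hgc.mono hIcccb).sub ((continuousOn_const.mul
        ((continuousOn_id.sub continuousOn_const).pow 2)).div_const 2))
      (f' := fun x => g' x - δ * (x - c)) ?_ ?_
    · rw [interior_Icc]
      intro x hx
      have h1 : HasDerivAt (fun x => δ * (x - c) ^ 2 / 2) (δ * (x - c)) x := by
        have h0 : HasDerivAt (fun x => δ * (x - c) ^ 2 / 2) (δ * ((2:ℕ) * (x - c) ^ (2 - 1) * 1) / 2) x := ((((hasDerivAt_id x).sub_const c).pow 2).const_mul δ).div_const 2
        convert h0 using 1
        simp only [mul_one]
        push_cast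
        ring
      exact ((hg x (hIcccb ⟨hx.1.le, hx.2.le⟩)).sub h1).hasDerivWithinAt
    · rw [interior_Icc]
      intro x hx
      -- g' x - g' c ≥ δ (x - c) by MVT on [c, x]
      have hcx : c < x := hx.1
      obtain ⟨e, he, heslope⟩ := exists_hasDerivAt_eq_slope g' g'' hcx
        (hg'c.mono (Set.Icc_subset_Icc hac.le hx.2.le))
        (fun y hy => hg' y ⟨hac.le.trans hy.1.le, hy.2.le.trans hx.2.le⟩)
      have heIoo : e ∈ Set.Ioo a b := ⟨hac.trans he.1, he.2.trans hx.2⟩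
      have hδe : δ ≤ g'' e := hconv e heIoo
      have hxcne : x - c ≠ 0 := sub_ne_zero.mpr hcx.ne'
      have heq : g' x - g' c = g'' e * (x - c) := by
        rw [heslope, div_mul_cancel₀ _ hxcne]
      rw [hgc0] at heq
      show 0 ≤ g' x - δ * (x - c)
      nlinarith [hx.1]
  have hφle : g c ≤ R - δ * (b - c) ^ 2 / 2 := by
    have := hφ (Set.left_mem_Icc.mpr hcb.le) (Set.right_mem_Icc.mpr hcb.le) hcb.le
    simp only [sub_self, hgb] at this
    have h0 : g c - δ * (c - c) ^ 2 / 2 = g c := by ring_nf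
    simp only [sub_self] at h0
    calc g c = g c - δ * (c - c) ^ 2 / 2 := by ring
    _ ≤ g b - δ * (b - c) ^ 2 / 2 :=
      hφ (Set.left_mem_Icc.mpr hcb.le) (Set.right_mem_Icc.mpr hcb.le) hcb.le
    _ = R - δ * (b - c) ^ 2 / 2 := by rw [hgb]
  -- combine
  set t : ℝ := -g' a with ht
  have ht0 : 0 < t := by rw [ht]; linarith
  have h1 : δ * (c - a) ≤ t := by nlinarith
  have h2 : t ≤ M * (c - a) := by nlinarith
  -- δ (b-c)^2/2 ≤ R - g c ≤ t (c - a)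
  have h3 : δ * (b - c) ^ 2 / 2 ≤ t * (c - a) := by nlinarith
  have h4 : δ * δ * (b - c) ^ 2 ≤ 2 * t * t := by
    nlinarith [mul_le_mul_of_nonneg_left h3 hδ.le, mul_le_mul_of_nonneg_left h1 ht0.le]
  have hbc : δ * (b - c) ≤ 3 / 2 * t := by
    nlinarith [mul_pos ht0 ht0, sq_nonneg (δ * (b - c) - 3 / 2 * t), hcb]
  constructor
  · rw [habs, div_mul_eq_mul_div, div_lt_iff₀ (by linarith : (0:ℝ) < M + 1)]
    nlinarith [mul_nonneg hM hca.le, mul_pos (show (0:ℝ) < M + 1 by linarith)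
      (show (0:ℝ) < b - c by linarith)]
  · rw [habs, div_mul_eq_mul_div, lt_div_iff₀ hδ]
    linarith
end

section
/- Let g : [a,b] → ℝ be a C² function with Lipschitz second derivative such that g(a) = g(b) = R > 0, g(x) < R for x ∈ (a,b), and g''(x) ≥ δ > 0 on (a,b). Then there exists C > 0 depending only on R, δ and the C^{2,1}-norm of g such that |R - g(x)| < C·g'(a)² for all x ∈ [a,b], provided |g'(a)| is sufficiently small compared to δ. -/
set_option maxHeartbeats 1000000

theorem stmt_7 (R δ L M : ℝ) (hR : 0 < R) (hδ : 0 < δ) (hL : 0 ≤ L) (hM : 0 ≤ M) :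
    ∃ C ε : ℝ, 0 < C ∧ 0 < ε ∧
      ∀ (a b : ℝ) (g g' g'' : ℝ → ℝ), a < b →
        (∀ x ∈ Set.Icc a b, HasDerivAt g (g' x) x) →
        (∀ x ∈ Set.Icc a b, HasDerivAt g' (g'' x) x) →
        LipschitzOnWith (Real.toNNReal L) g'' (Set.Icc a b) →
        (∀ x ∈ Set.Icc a b, |g x| ≤ M ∧ |g' x| ≤ M ∧ |g'' x| ≤ M) →
        g a = R → g b = R →
        (∀ x ∈ Set.Ioo a b, g x < R) →
        (∀ x ∈ Set.Ioo a b, δ ≤ g'' x) →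
        |g' a| < ε →
        ∀ x ∈ Set.Icc a b, |R - g x| < C * (g' a) ^ 2 := by
  refine ⟨(2*δ + 4*M + δ^2)/δ^2, 1, by positivity, one_pos, ?_⟩
  intro a b g g' g'' hab hg hg' _hLip hbnd hga hgb _hlt hconv _hsmall x hx
  have hgc : ContinuousOn g (Set.Icc a b) := fun y hy => (hg y hy).continuousAt.continuousWithinAt
  have hg'c : ContinuousOn g' (Set.Icc a b) :=
    fun y hy => (hg' y hy).continuousAt.continuousWithinAt
  -- lower bound on g' : g' a + δ (y - a) ≤ g' y on Ioo a b
  have hg'lb : ∀ y ∈ Set.Ioo a b, g' a + δ * (y - a) ≤ g' y := by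
    intro y hy
    obtain ⟨hay, hyb⟩ := hy
    have hsub : Set.Icc a y ⊆ Set.Icc a b := Set.Icc_subset_Icc le_rfl hyb.le
    obtain ⟨ζ, hζ, hζeq⟩ := exists_hasDerivAt_eq_slope g' g'' hay (hg'c.mono hsub)
      (fun z hz => hg' z ⟨hz.1.le, (hz.2.trans hyb).le⟩)
    have hζab : ζ ∈ Set.Ioo a b := ⟨hζ.1, hζ.2.trans hyb⟩
    have hδζ := hconv ζ hζab
    have hya : 0 < y - a := by linarith
    have : g' y - g' a = g'' ζ * (y - a) := by
      field_simp at hζeq; linarith [hζeq]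
    nlinarith
  -- the auxiliary function ψ is monotone, giving  g' a * (b-a) + δ/2 * (b-a)^2 ≤ 0
  set ψ : ℝ → ℝ := fun y => g y - (g' a * (y - a) + δ/2 * (y - a)^2) with hψ
  have hψd : ∀ y ∈ Set.Icc a b, HasDerivAt ψ (g' y - (g' a + δ * (y - a))) y := by
    intro y hy
    have h1 : HasDerivAt (fun z : ℝ => z - a) 1 y := (hasDerivAt_id y).sub_const a
    have h2 := ((h1.const_mul (g' a)).add ((h1.pow 2).const_mul (δ/2)))
    have h3 := (hg y hy).sub h2
    convert h3 using 1
    case e'_9 => ring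
    all_goals rfl
  have hmono : MonotoneOn ψ (Set.Icc a b) := by
    apply monotoneOn_of_deriv_nonneg (convex_Icc a b)
    · exact fun y hy => ((hψd y hy).continuousAt).continuousWithinAt
    · intro y hy
      rw [interior_Icc] at hy
      exact ((hψd y (Set.Ioo_subset_Icc_self hy)).differentiableAt).differentiableWithinAt
    · intro y hy
      rw [interior_Icc] at hy
      rw [(hψd y (Set.Ioo_subset_Icc_self hy)).deriv]
      have := hg'lb y hy
      linarith
  have hkey : g' a * (b - a) + δ/2 * (b - a)^2 ≤ 0 := by
    have := hmono (Set.left_mem_Icc.2 hab.le) (Set.right_mem_Icc.2 hab.le) hab.le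
    simp only [hψ] at this
    have hgab : g a = g b := by rw [hga, hgb]
    simp only [sub_self] at this
    nlinarith [this]
  have hba : 0 < b - a := by linarith
  have hs : g' a < 0 := by nlinarith [mul_pos hδ (mul_pos hba hba)]
  have hδu : δ * (b - a) ≤ 2 * (-(g' a)) := by nlinarith
  -- bound |g x - g a|
  have hbound : |g x - g a| ≤ (b - a) * (-(g' a) + M * (b - a)) := by
    rcases eq_or_lt_of_le hx.1 with h | hax
    · rw [← h]; simp
      nlinarith [mul_pos hba (show (0:ℝ) < -g' a + M*(b-a) by nlinarith [mul_nonneg hM hba.le])]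
    · obtain ⟨ξ, hξ, hξeq⟩ := exists_hasDerivAt_eq_slope g g' hax
        (hgc.mono (Set.Icc_subset_Icc le_rfl hx.2))
        (fun z hz => hg z ⟨hz.1.le, (hz.2.trans_le hx.2).le⟩)
      have hξab : ξ ∈ Set.Icc a b := ⟨hξ.1.le, (hξ.2.trans_le hx.2).le⟩
      -- |g' ξ| ≤ |g' a| + M (ξ - a)
      obtain ⟨ζ, hζ, hζeq⟩ := exists_hasDerivAt_eq_slope g' g'' hξ.1
        (hg'c.mono (Set.Icc_subset_Icc le_rfl hξab.2))
        (fun z hz => hg' z ⟨hz.1.le, hz.2.le.trans hξab.2⟩)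
      have hζab : ζ ∈ Set.Icc a b := ⟨hζ.1.le, hζ.2.le.trans hξab.2⟩
      have hM2 := (hbnd ζ hζab).2.2
      have hξa : 0 < ξ - a := by linarith [hξ.1]
      have hxa : 0 < x - a := by linarith
      have e1 : g' ξ - g' a = g'' ζ * (ξ - a) := by
        field_simp at hζeq; linarith [hζeq]
      have e2 : g x - g a = g' ξ * (x - a) := by
        field_simp at hξeq; linarith [hξeq]
      have hg'ξ : |g' ξ| ≤ -(g' a) + M * (b - a) := by
        rw [abs_le]; rw [abs_le] at hM2
        constructor <;> nlinarith [hξab.2, hξ.1.le, hζab.2]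
      rw [e2, abs_mul, abs_of_pos hxa]
      have hxb : x - a ≤ b - a := by linarith [hx.2]
      have h0 : (0:ℝ) ≤ -(g' a) + M * (b - a) := by nlinarith
      calc |g' ξ| * (x - a) ≤ (-(g' a) + M * (b - a)) * (x - a) := by
            exact mul_le_mul_of_nonneg_right hg'ξ hxa.le
        _ ≤ (b - a) * (-(g' a) + M * (b - a)) := by nlinarith
  have hRg : |R - g x| ≤ (b - a) * (-(g' a) + M * (b - a)) := by
    rw [← hga, abs_sub_comm]; exact hbound
  rw [div_mul_eq_mul_div, lt_div_iff₀ (by positivity)]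
  set s : ℝ := -(g' a) with hsdef
  have hs0 : 0 < s := by simp [hsdef]; linarith
  have hsq : (g' a)^2 = s^2 := by simp [hsdef]
  rw [hsq]
  nlinarith [mul_nonneg (mul_nonneg hδ.le hs0.le) (by linarith : (0:ℝ) ≤ 2*s - δ*(b-a)),
    mul_nonneg hM (mul_nonneg (by linarith : (0:ℝ) ≤ 2*s - δ*(b-a))
      (by nlinarith : (0:ℝ) ≤ 2*s + δ*(b-a))),
    mul_pos (mul_pos hδ hδ) (mul_pos hs0 hs0),
    mul_nonneg hδ.le (mul_nonneg hδ.le (mul_nonneg hba.le hs0.le)),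
    abs_nonneg (R - g x)]
end

section
/- Let g : [a,b] → ℝ be a C² function with Lipschitz second derivative such that g(a) = g(b) = R > 0, g(x) < R for x ∈ (a,b), and g''(x) ≥ δ > 0 on (a,b). Then there exists C > 0 depending only on R, δ and the C^{2,1}-norm of g such that |g'(a) + g'(b)| < C·g'(a)², provided |g'(a)| is sufficiently small compared to δ. -/
set_option maxHeartbeats 1000000

theorem stmt_8 (R δ L M : ℝ) (hR : 0 < R) (hδ : 0 < δ) (hL : 0 ≤ L) (hM : 0 ≤ M) :
    ∃ C ε : ℝ, 0 < C ∧ 0 < ε ∧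
      ∀ (a b : ℝ) (g g' g'' : ℝ → ℝ), a < b →
        (∀ x ∈ Set.Icc a b, HasDerivAt g (g' x) x) →
        (∀ x ∈ Set.Icc a b, HasDerivAt g' (g'' x) x) →
        LipschitzOnWith (Real.toNNReal L) g'' (Set.Icc a b) →
        (∀ x ∈ Set.Icc a b, |g x| ≤ M ∧ |g' x| ≤ M ∧ |g'' x| ≤ M) →
        g a = R → g b = R →
        (∀ x ∈ Set.Ioo a b, g x < R) →
        (∀ x ∈ Set.Ioo a b, δ ≤ g'' x) →
        |g' a| < ε →
        |g' a + g' b| < C * (g' a) ^ 2 := by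
  refine ⟨12 * L / δ ^ 2 + 1, 1, by positivity, one_pos, ?_⟩
  intro a b g g' g'' hab hg hg' hlip hbound ha hb hlt hconv _hε
  -- continuity
  have hgc : ContinuousOn g (Set.Icc a b) := fun x hx => (hg x hx).continuousAt.continuousWithinAt
  have hg'c : ContinuousOn g' (Set.Icc a b) := fun x hx => (hg' x hx).continuousAt.continuousWithinAt
  have hg''c : ContinuousOn g'' (Set.Icc a b) := hlip.continuousOn
  -- δ ≤ g'' on the closed interval
  have hδ'' : ∀ x ∈ Set.Icc a b, δ ≤ g'' x := by
    intro x hx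
    have hcl : x ∈ closure (Set.Ioo a b) := by
      rw [closure_Ioo hab.ne]; exact hx
    have h1 : ContinuousWithinAt g'' (Set.Ioo a b) x := (hg''c x hx).mono Set.Ioo_subset_Icc_self
    haveI h2 : (nhdsWithin x (Set.Ioo a b)).NeBot := mem_closure_iff_nhdsWithin_neBot.mp hcl
    exact ge_of_tendsto h1 (Filter.eventually_of_mem self_mem_nhdsWithin (fun y hy => hconv y hy))
  -- FTC for g and g'
  have hsub : ∀ x ∈ Set.Icc a b, ∀ y ∈ Set.Icc a b, x ≤ y → Set.Icc x y ⊆ Set.Icc a b :=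
    fun x hx y hy _ => Set.Icc_subset_Icc hx.1 hy.2
  have hFTC : ∀ x ∈ Set.Icc a b, ∀ y ∈ Set.Icc a b, x ≤ y →
      ∫ u in x..y, g' u = g y - g x := by
    intro x hx y hy hxy
    refine intervalIntegral.integral_eq_sub_of_hasDerivAt (fun u hu => ?_) ?_
    · exact hg u (hsub x hx y hy hxy (by rwa [Set.uIcc_of_le hxy] at hu))
    · exact (hg'c.mono (by rw [Set.uIcc_of_le hxy]; exact hsub x hx y hy hxy)).intervalIntegrable
  have hFTC' : ∀ x ∈ Set.Icc a b, ∀ y ∈ Set.Icc a b, x ≤ y →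
      ∫ u in x..y, g'' u = g' y - g' x := by
    intro x hx y hy hxy
    refine intervalIntegral.integral_eq_sub_of_hasDerivAt (fun u hu => ?_) ?_
    · exact hg' u (hsub x hx y hy hxy (by rwa [Set.uIcc_of_le hxy] at hu))
    · exact (hg''c.mono (by rw [Set.uIcc_of_le hxy]; exact hsub x hx y hy hxy)).intervalIntegrable
  -- strict monotonicity of g'
  have hmono : StrictMonoOn g' (Set.Icc a b) := by
    apply strictMonoOn_of_deriv_pos (convex_Icc a b) hg'c
    intro x hx
    rw [interior_Icc] at hx
    rw [(hg' x (Set.Ioo_subset_Icc_self hx)).deriv]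
    exact lt_of_lt_of_le hδ (hconv x hx)
  have haI : a ∈ Set.Icc a b := Set.left_mem_Icc.mpr hab.le
  have hbI : b ∈ Set.Icc a b := Set.right_mem_Icc.mpr hab.le
  have hg'int : IntervalIntegrable g' MeasureTheory.volume a b :=
    (hg'c.mono (by rw [Set.uIcc_of_le hab.le])).intervalIntegrable
  have hint0 : ∫ u in a..b, g' u = 0 := by
    rw [hFTC a haI b hbI hab.le, ha, hb, sub_self]
  -- g' a < 0
  have hs : g' a < 0 := by
    by_contra h
    push_neg at h
    have hpos : ∀ x ∈ Set.Ioo a b, 0 < g' x := fun x hx =>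
      lt_of_le_of_lt h (hmono haI (Set.Ioo_subset_Icc_self hx) hx.1)
    have := intervalIntegral.intervalIntegral_pos_of_pos_on hg'int hpos hab
    rw [hint0] at this
    exact lt_irrefl 0 this
  -- g' b > 0
  have ht : 0 < g' b := by
    by_contra h
    push_neg at h
    have hpos : ∀ x ∈ Set.Ioo a b, 0 < -g' x := fun x hx => by
      have := hmono (Set.Ioo_subset_Icc_self hx) hbI hx.2
      linarith
    have := intervalIntegral.intervalIntegral_pos_of_pos_on hg'int.neg hpos hab
    simp only [Pi.neg_apply] at this
    rw [intervalIntegral.integral_neg, hint0] at this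
    simp at this
  -- the zero c of g'
  obtain ⟨c, hcI, hc0⟩ : ∃ c ∈ Set.Icc a b, g' c = 0 := by
    have := intermediate_value_Icc hab.le hg'c
    have h0 : (0:ℝ) ∈ Set.Icc (g' a) (g' b) := ⟨hs.le, ht.le⟩
    obtain ⟨c, hc, hc0⟩ := this h0
    exact ⟨c, hc, hc0⟩
  have hac : a < c := lt_of_le_of_ne hcI.1 (by rintro rfl; exact absurd hc0 hs.ne)
  have hcb : c < b := lt_of_le_of_ne hcI.2 (by rintro rfl; exact absurd hc0 ht.ne')
  have hg''int : ∀ x ∈ Set.Icc a b, ∀ y ∈ Set.Icc a b, x ≤ y →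
      IntervalIntegrable g'' MeasureTheory.volume x y := fun x hx y hy hxy =>
    (hg''c.mono (by rw [Set.uIcc_of_le hxy]; exact hsub x hx y hy hxy)).intervalIntegrable
  have hg'int2 : ∀ x ∈ Set.Icc a b, ∀ y ∈ Set.Icc a b, x ≤ y →
      IntervalIntegrable g' MeasureTheory.volume x y := fun x hx y hy hxy =>
    (hg'c.mono (by rw [Set.uIcc_of_le hxy]; exact hsub x hx y hy hxy)).intervalIntegrable
  -- (i) δ(c-a) ≤ -g' a
  have hi : δ * (c - a) ≤ -g' a := by
    have h1 : ∫ u in a..c, g'' u = g' c - g' a := hFTC' a haI c hcI hac.le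
    have h2 : ∫ u in a..c, (δ:ℝ) ≤ ∫ u in a..c, g'' u :=
      intervalIntegral.integral_mono_on hac.le intervalIntegrable_const
        (hg''int a haI c hcI hac.le)
        (fun x hx => hδ'' x (hsub a haI c hcI hac.le hx))
    simp only [intervalIntegral.integral_const, smul_eq_mul] at h2
    rw [h1, hc0] at h2
    nlinarith [h2]
  -- (iii) R - g c ≤ (-g' a) * (c - a)
  have hiii : R - g c ≤ (-g' a) * (c - a) := by
    have h1 : ∫ u in a..c, g' u = g c - g a := hFTC a haI c hcI hac.le
    have h2 : ∫ u in a..c, g' a ≤ ∫ u in a..c, g' u :=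
      intervalIntegral.integral_mono_on hac.le intervalIntegrable_const
        (hg'int2 a haI c hcI hac.le)
        (fun x hx => hmono.monotoneOn haI (hsub a haI c hcI hac.le hx)
          (hsub a haI c hcI hac.le hx).1)
    simp only [intervalIntegral.integral_const, smul_eq_mul] at h2
    rw [h1, ha] at h2
    nlinarith [h2]
  -- lower bound for g' on [c,b]
  have hlow : ∀ x ∈ Set.Icc c b, δ * (x - c) ≤ g' x := by
    intro x hx
    have hxI : x ∈ Set.Icc a b := ⟨le_trans hac.le hx.1, hx.2⟩
    have h1 : ∫ u in c..x, g'' u = g' x - g' c := hFTC' c hcI x hxI hx.1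
    have h2 : ∫ u in c..x, (δ:ℝ) ≤ ∫ u in c..x, g'' u :=
      intervalIntegral.integral_mono_on hx.1 intervalIntegrable_const
        (hg''int c hcI x hxI hx.1)
        (fun y hy => hδ'' y (hsub c hcI x hxI hx.1 hy))
    simp only [intervalIntegral.integral_const, smul_eq_mul] at h2
    rw [h1, hc0] at h2
    nlinarith [h2]
  -- (iv) δ(b-c)²/2 ≤ R - g c
  have hiv : δ * ((b - c) ^ 2 / 2) ≤ R - g c := by
    have h1 : ∫ u in c..b, g' u = g b - g c := hFTC c hcI b hbI hcb.le
    have h2 : ∫ u in c..b, δ * (u - c) ≤ ∫ u in c..b, g' u :=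
      intervalIntegral.integral_mono_on hcb.le
        ((continuous_const.mul (continuous_id.sub continuous_const)).intervalIntegrable c b)
        (hg'int2 c hcI b hbI hcb.le) hlow
    have h3 : ∫ u in c..b, δ * (u - c) = δ * ((b - c) ^ 2 / 2) := by
      rw [intervalIntegral.integral_const_mul]
      congr 1
      rw [intervalIntegral.integral_sub (continuous_id'.intervalIntegrable c b)
        intervalIntegrable_const, integral_id, intervalIntegral.integral_const]
      simp only [smul_eq_mul]
      ring
    rw [h3, h1, hb] at h2
    exact h2
  -- geometric bound: δ²(b-a)² ≤ 6 (g' a)²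
  have hgeo : δ ^ 2 * (b - a) ^ 2 ≤ 6 * g' a ^ 2 := by
    have e2 : δ * (b - c) ^ 2 ≤ 2 * ((-g' a) * (c - a)) := by linarith
    have e3 : δ ^ 2 * (b - c) ^ 2 ≤ 2 * (g' a) ^ 2 := by
      nlinarith [mul_le_mul_of_nonneg_left e2 hδ.le,
        mul_le_mul_of_nonneg_left hi (by linarith : (0:ℝ) ≤ 2 * (c - a)), hs,
        mul_pos hδ (sub_pos.mpr hac)]
    have e4 : δ ^ 2 * (c - a) ^ 2 ≤ (g' a) ^ 2 := by
      have hp : (0:ℝ) ≤ δ * (c - a) := (mul_pos hδ (sub_pos.mpr hac)).le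
      have := mul_nonneg (by linarith [hi] : (0:ℝ) ≤ -g' a - δ * (c - a))
        (by linarith : (0:ℝ) ≤ -g' a + δ * (c - a))
      nlinarith [this]
    nlinarith [e3, e4, sq_nonneg ((c - a) - (b - c)), sq_nonneg δ]
  -- main identity
  have hident : ∫ x in a..b, g' x * g'' x = (g' b ^ 2 - g' a ^ 2) / 2 := by
    have hgg : ∀ u ∈ Set.uIcc a b, HasDerivAt (fun y => g' y ^ 2 / 2) (g' u * g'' u) u := by
      intro u hu
      have huI : u ∈ Set.Icc a b := by rwa [Set.uIcc_of_le hab.le] at hu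
      have h := ((hg' u huI).pow 2).div_const 2
      refine h.congr_deriv ?_
      ring
    rw [intervalIntegral.integral_eq_sub_of_hasDerivAt hgg
      (((hg'c.mul hg''c).mono (by rw [Set.uIcc_of_le hab.le])).intervalIntegrable)]
    ring
  have hsplit : ∫ x in a..b, g' x * (g'' x - g'' c) = (g' b ^ 2 - g' a ^ 2) / 2 := by
    have heq : ∫ x in a..b, g' x * (g'' x - g'' c)
        = (∫ x in a..b, g' x * g'' x) - g'' c * ∫ x in a..b, g' x := by
      rw [← intervalIntegral.integral_const_mul, ← intervalIntegral.integral_sub (f := fun x => g' x * g'' x) (g := fun x => g'' c * g' x)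
        (((hg'c.mul hg''c).mono (by rw [Set.uIcc_of_le hab.le])).intervalIntegrable)
        (((continuousOn_const.mul hg'c).mono (by rw [Set.uIcc_of_le hab.le])).intervalIntegrable)]
      apply intervalIntegral.integral_congr
      intro x _
      ring
    rw [heq, hident, hint0, mul_zero, sub_zero]
  -- bound on the integral
  have habs : |(g' b ^ 2 - g' a ^ 2) / 2| ≤ ((-g' a) + g' b) * (L * (b - a)) * |b - a| := by
    rw [← hsplit, ← Real.norm_eq_abs]
    apply intervalIntegral.norm_integral_le_of_norm_le_const
    intro x hx
    rw [Set.uIoc_of_le hab.le] at hx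
    have hxI : x ∈ Set.Icc a b := Set.Ioc_subset_Icc_self hx
    have hb1 : |g' x| ≤ (-g' a) + g' b := by
      have hl := hmono.monotoneOn haI hxI hxI.1
      have hr := hmono.monotoneOn hxI hbI hxI.2
      rw [abs_le]
      constructor <;> linarith
    have hb2 : |g'' x - g'' c| ≤ L * (b - a) := by
      have hd := hlip.dist_le_mul x hxI c hcI
      rw [Real.dist_eq, Real.dist_eq, Real.coe_toNNReal L hL] at hd
      have hxc : |x - c| ≤ b - a := by
        rw [abs_le]
        constructor <;> [linarith [hxI.1, hcI.2]; linarith [hxI.2, hcI.1]]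
      calc |g'' x - g'' c| ≤ L * |x - c| := hd
        _ ≤ L * (b - a) := by nlinarith [abs_nonneg (x - c)]
    rw [Real.norm_eq_abs, abs_mul]
    exact mul_le_mul hb1 hb2 (abs_nonneg _) (by linarith [hs, ht])
  -- conclude
  have hst : 0 < (-g' a) + g' b := by linarith
  have hfin : |g' a + g' b| ≤ 2 * (L * (b - a) ^ 2) := by
    have hkey : |g' a + g' b| * ((-g' a) + g' b) = |g' b ^ 2 - g' a ^ 2| := by
      rw [← abs_of_pos hst, ← abs_mul]
      congr 1
      ring
    have h1 : |g' b ^ 2 - g' a ^ 2| ≤ 2 * (((-g' a) + g' b) * (L * (b - a)) * |b - a|) := by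
      have := habs
      rw [abs_div] at this
      simp only [abs_two] at this
      linarith [this]
    rw [abs_of_nonneg (by linarith : (0:ℝ) ≤ b - a)] at h1
    have h2 : |g' a + g' b| * ((-g' a) + g' b) ≤ 2 * (L * (b - a) ^ 2) * ((-g' a) + g' b) := by
      rw [hkey]
      nlinarith [h1]
    exact le_of_mul_le_mul_right h2 hst
  have hq : 0 < g' a ^ 2 := by nlinarith [hs]
  have hδ2 : 0 < δ ^ 2 := pow_pos hδ 2
  have h2L : 2 * (L * (b - a) ^ 2) * δ ^ 2 ≤ 12 * L * g' a ^ 2 := by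
    have := mul_le_mul_of_nonneg_left hgeo (by linarith : (0:ℝ) ≤ 2 * L)
    nlinarith [this]
  rw [show (12 * L / δ ^ 2 + 1) * g' a ^ 2
      = (12 * L * g' a ^ 2 + δ ^ 2 * g' a ^ 2) / δ ^ 2 by field_simp,
    lt_div_iff₀ hδ2]
  have h3 : |g' a + g' b| * δ ^ 2 ≤ 2 * (L * (b - a) ^ 2) * δ ^ 2 :=
    mul_le_mul_of_nonneg_right hfin hδ2.le
  nlinarith [h3, h2L, mul_pos hδ2 hq]
end

section
/- A tetrahedron in ℝ³ has all four cone angles (sums of the three face angles at each vertex) equal to π if and only if opposite edges have equal lengths (i.e. it is isosceles/a disphenoid). -/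
set_option maxHeartbeats 1000000

open EuclideanGeometry Complex ComplexConjugate RealInnerProductSpace

/-- SSS: angles are determined by the three distances, across different spaces. -/
private lemma sss_vec {E F : Type*} [NormedAddCommGroup E] [InnerProductSpace ℝ E]
    [NormedAddCommGroup F] [InnerProductSpace ℝ F] {x y : E} {z w : F}
    (h1 : ‖x‖ = ‖z‖) (h2 : ‖y‖ = ‖w‖) (h3 : ‖x - y‖ = ‖z - w‖) :
    InnerProductGeometry.angle x y = InnerProductGeometry.angle z w := by
  have hx : ⟪x, y⟫ = (‖x‖^2 + ‖y‖^2 - ‖x - y‖^2) / 2 := by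
    have := norm_sub_sq_real x y; linarith
  have hz : ⟪z, w⟫ = (‖z‖^2 + ‖w‖^2 - ‖z - w‖^2) / 2 := by
    have := norm_sub_sq_real z w; linarith
  rw [InnerProductGeometry.angle, InnerProductGeometry.angle, hx, hz, h1, h2, h3]

private lemma sss_pts {V P V' P' : Type*} [NormedAddCommGroup V] [InnerProductSpace ℝ V]
    [MetricSpace P] [NormedAddTorsor V P] [NormedAddCommGroup V'] [InnerProductSpace ℝ V']
    [MetricSpace P'] [NormedAddTorsor V' P']
    {p1 p2 p3 : P} {q1 q2 q3 : P'}
    (h1 : dist p1 p2 = dist q1 q2) (h2 : dist p3 p2 = dist q3 q2)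
    (h3 : dist p1 p3 = dist q1 q3) :
    EuclideanGeometry.angle p1 p2 p3 = EuclideanGeometry.angle q1 q2 q3 := by
  unfold EuclideanGeometry.angle
  apply sss_vec
  · rw [← dist_eq_norm_vsub V p1 p2, ← dist_eq_norm_vsub V' q1 q2]; exact h1
  · rw [← dist_eq_norm_vsub V p3 p2, ← dist_eq_norm_vsub V' q3 q2]; exact h2
  · rw [vsub_sub_vsub_cancel_right, vsub_sub_vsub_cancel_right,
      ← dist_eq_norm_vsub V p1 p3, ← dist_eq_norm_vsub V' q1 q3]; exact h3

/-- A 3D point-angle equals a planar vector angle when distances match. -/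
private lemma angle3d {p1 p2 p3 : EuclideanSpace ℝ (Fin 3)} {a b : ℂ}
    (h1 : dist p1 p2 = ‖a‖) (h2 : dist p3 p2 = ‖b‖)
    (h3 : dist p1 p3 = ‖a - b‖) :
    EuclideanGeometry.angle p1 p2 p3 = InnerProductGeometry.angle a b := by
  unfold EuclideanGeometry.angle
  apply sss_vec
  · rw [← dist_eq_norm_vsub]; exact h1
  · rw [← dist_eq_norm_vsub]; exact h2
  · rw [vsub_sub_vsub_cancel_right, ← dist_eq_norm_vsub]; exact h3

private lemma angle_abs_arg {a b : ℂ} (ha : a ≠ 0) (hb : b ≠ 0) :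
    InnerProductGeometry.angle a b = |Complex.arg (b / a)| := by
  have hba : b / a ≠ 0 := div_ne_zero hb ha
  have haa : ‖a‖ ≠ 0 := by simpa using ha
  have hbb : ‖b‖ ≠ 0 := by simpa using hb
  have hcos : Real.cos (Complex.arg (b / a)) = ⟪a, b⟫ / (‖a‖ * ‖b‖) := by
    rw [Complex.cos_arg hba, Complex.inner,
      Complex.div_re, norm_div]
    rw [Complex.mul_re, Complex.conj_re, Complex.conj_im]
    have h1 : normSq a = ‖a‖ ^ 2 := (Complex.sq_norm a).symm
    field_simp [h1]
    rw [h1]; ring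
  have : InnerProductGeometry.angle a b = Real.arccos (Real.cos (Complex.arg (b / a))) := by
    rw [InnerProductGeometry.angle, hcos]
  rw [this]
  rcases le_or_gt 0 (Complex.arg (b / a)) with hpos | hneg
  · rw [Real.arccos_cos hpos (Complex.arg_le_pi _)]
    exact (_root_.abs_of_nonneg hpos).symm
  · rw [← Real.cos_neg, Real.arccos_cos (by linarith)
      (by have := Complex.neg_pi_lt_arg (b / a); linarith)]
    exact (_root_.abs_of_neg hneg).symm

private lemma arg_pos_of_im_pos {z : ℂ} (hz : 0 < z.im) : 0 < z.arg ∧ z.arg < Real.pi := by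
  have hz0 : z ≠ 0 := by intro h; rw [h] at hz; simp at hz
  have hsin : 0 < Real.sin z.arg := by
    rw [Complex.sin_arg]
    exact div_pos hz (norm_pos_iff.mpr hz0)
  constructor
  · by_contra hle
    push_neg at hle
    have := Real.sin_nonpos_of_nonpos_of_neg_pi_le hle (Complex.neg_pi_lt_arg z).le
    linarith
  · rcases lt_or_eq_of_le (Complex.arg_le_pi z) with h | h
    · exact h
    · rw [h] at hsin; simp at hsin

/-- The key "fan" lemma: if three consecutive positively-oriented angles at the origin
sum to `π`, the outer vectors are opposite (given equal lengths). -/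
private lemma fan_pos {a b c d : ℂ} (ha : a ≠ 0) (hb : b ≠ 0) (hc : c ≠ 0) (hd : d ≠ 0)
    (h1 : 0 < (b * conj a).im) (h2 : 0 < (c * conj b).im) (h3 : 0 < (d * conj c).im)
    (hsum : InnerProductGeometry.angle a b + InnerProductGeometry.angle b c
      + InnerProductGeometry.angle c d = Real.pi)
    (habs : ‖d‖ = ‖a‖) : d = -a := by
  have him : ∀ x y : ℂ, x ≠ 0 → 0 < (y * conj x).im → 0 < (y / x).im := by
    intro x y hx hxy
    have hns : 0 < normSq x := Complex.normSq_pos.2 hx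
    have : y * conj x = (y / x) * (normSq x : ℂ) := by
      rw [← Complex.mul_conj x, div_mul_eq_mul_div, mul_comm x (conj x), ← mul_assoc,
        mul_div_assoc, div_self hx, mul_one]
    rw [this] at hxy
    simp only [Complex.mul_im, Complex.ofReal_re, Complex.ofReal_im, mul_zero, add_zero] at hxy
    nlinarith
  have hr1 := arg_pos_of_im_pos (him a b ha h1)
  have hr2 := arg_pos_of_im_pos (him b c hb h2)
  have hr3 := arg_pos_of_im_pos (him c d hc h3)
  have e1 : InnerProductGeometry.angle a b = (b / a).arg := by
    rw [angle_abs_arg ha hb, abs_of_pos hr1.1]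
  have e2 : InnerProductGeometry.angle b c = (c / b).arg := by
    rw [angle_abs_arg hb hc, abs_of_pos hr2.1]
  have e3 : InnerProductGeometry.angle c d = (d / c).arg := by
    rw [angle_abs_arg hc hd, abs_of_pos hr3.1]
  rw [e1, e2, e3] at hsum
  have hprod : d / a = (b / a) * (c / b) * (d / c) := by
    field_simp
  have tri_polar : ∀ u v w : ℂ, u * v * w =
      ((‖u‖ * ‖v‖ * ‖w‖ : ℝ) : ℂ) *
        Complex.exp (((u.arg + v.arg + w.arg : ℝ)) * Complex.I) := by
    intro u v w
    conv_lhs => rw [← Complex.norm_mul_exp_arg_mul_I u, ← Complex.norm_mul_exp_arg_mul_I v,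
      ← Complex.norm_mul_exp_arg_mul_I w]
    push_cast
    rw [add_mul, add_mul, Complex.exp_add, Complex.exp_add]
    ring
  set m : ℝ := ‖b/a‖ * ‖c/b‖ * ‖d/c‖ with hmdef
  have hda : d / a = -(m : ℂ) := by
    rw [hprod, tri_polar, hsum, Complex.exp_pi_mul_I]
    ring
  have hm : d = -(m : ℂ) * a := by
    have h' := congrArg (fun z : ℂ => z * a) hda
    rw [div_mul_cancel₀ d ha] at h'
    exact h'
  have hmnn : 0 ≤ m := by positivity
  have habs2 : ‖d‖ = m * ‖a‖ := by
    rw [hm, norm_mul, norm_neg, Complex.norm_real, Real.norm_of_nonneg hmnn]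
  have haposa : 0 < ‖a‖ := norm_pos_iff.mpr ha
  have hm1 : m = 1 := by
    apply mul_right_cancel₀ (ne_of_gt haposa)
    rw [one_mul, ← habs2]
    exact habs
  rw [hm1] at hm
  simpa using hm

private lemma fan_neg {a b c d : ℂ} (ha : a ≠ 0) (hb : b ≠ 0) (hc : c ≠ 0) (hd : d ≠ 0)
    (h1 : (b * conj a).im < 0) (h2 : (c * conj b).im < 0) (h3 : (d * conj c).im < 0)
    (hsum : InnerProductGeometry.angle a b + InnerProductGeometry.angle b c
      + InnerProductGeometry.angle c d = Real.pi)
    (habs : ‖d‖ = ‖a‖) : d = -a := by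
  have hconj : ∀ x y : ℂ, InnerProductGeometry.angle (conj x) (conj y)
      = InnerProductGeometry.angle x y := by
    intro x y
    apply sss_vec
    · rw [Complex.norm_conj]
    · rw [Complex.norm_conj]
    · rw [← map_sub, Complex.norm_conj]
  have him : ∀ x y : ℂ, (y * conj x).im < 0 → 0 < (conj y * conj (conj x)).im := by
    intro x y hxy
    rw [Complex.conj_conj]
    have e : conj y * x = conj (y * conj x) := by rw [map_mul, Complex.conj_conj]
    rw [e, Complex.conj_im]
    linarith
  have key := fan_pos (a := conj a) (b := conj b) (c := conj c) (d := conj d)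
    (by simpa using ha) (by simpa using hb) (by simpa using hc) (by simpa using hd)
    (him a b h1) (him b c h2) (him c d h3)
    (by rw [hconj, hconj, hconj]; exact hsum)
    (by rw [Complex.norm_conj, Complex.norm_conj]; exact habs)
  have := congrArg (fun z : ℂ => conj z) key
  simpa using this

/-- Construct a planar point at prescribed distances from two given points,
on a prescribed side of the line joining them. -/
private lemma construct_pt (P Q : ℂ) (u v ε : ℝ) (hε : ε = 1 ∨ ε = -1) (hPQ : P ≠ Q)
    (h1 : dist P Q < u + v) (h2 : u < dist P Q + v) (h3 : v < dist P Q + u) :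
    ∃ R : ℂ, dist R P = u ∧ dist R Q = v ∧ 0 < ε * ((R - P) * conj (Q - P)).im := by
  have hdpos : 0 < dist P Q := dist_pos.2 hPQ
  set d : ℝ := dist P Q with hd
  have hupos : 0 < u := by nlinarith
  have hvpos : 0 < v := by nlinarith
  have hd0 : d ≠ 0 := ne_of_gt hdpos
  set t : ℝ := (d^2 + u^2 - v^2) / (2*d) with ht
  have h2td : 2*t*d = d^2 + u^2 - v^2 := by rw [ht]; field_simp
  have hs2 : 0 < u^2 - t^2 := by
    have e : u^2 - t^2 = ((u+v-d)*(v+d-u)*(d+u-v)*(d+u+v)) / (4*d^2) := by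
      rw [ht]; field_simp; ring
    rw [e]
    have p1 : 0 < u+v-d := by linarith
    have p2 : 0 < v+d-u := by linarith
    have p3 : 0 < d+u-v := by linarith
    have p4 : 0 < d+u+v := by linarith
    positivity
  set s : ℝ := Real.sqrt (u^2 - t^2) with hsdef
  have hspos : 0 < s := Real.sqrt_pos.2 hs2
  have hss : s^2 = u^2 - t^2 := Real.sq_sqrt hs2.le
  have hε2 : ε^2 = 1 := by rcases hε with h | h <;> rw [h] <;> norm_num
  set z₀ : ℂ := (t : ℂ) + ((ε*s : ℝ) : ℂ) * Complex.I with hz₀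
  have hQP : ‖Q - P‖ = d := by
    rw [← Complex.dist_eq, dist_comm, Complex.dist_eq]
    rw [hd, Complex.dist_eq]
  have hdc : (d : ℂ) ≠ 0 := by exact_mod_cast hd0
  clear_value t s z₀
  refine ⟨P + (Q - P) * z₀ / (d : ℂ), ?_, ?_, ?_⟩
  · rw [Complex.dist_eq, add_sub_cancel_left, norm_div, norm_mul, hQP, Complex.norm_real,
      Real.norm_of_nonneg hdpos.le, hz₀, Complex.norm_add_mul_I]
    rw [mul_comm, mul_div_assoc, div_self hd0, mul_one]
    rw [show t^2 + (ε*s)^2 = u^2 by nlinarith]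
    exact Real.sqrt_sq hupos.le
  · rw [Complex.dist_eq]
    have e : P + (Q - P) * z₀ / (d : ℂ) - Q = (Q - P) * ((z₀ - (d:ℂ)) / (d:ℂ)) := by
      field_simp
      ring
    rw [e, norm_mul, hQP, norm_div, Complex.norm_real, Real.norm_of_nonneg hdpos.le]
    have e2 : z₀ - (d:ℂ) = ((t - d : ℝ) : ℂ) + ((ε*s : ℝ) : ℂ) * Complex.I := by
      rw [hz₀]; push_cast; ring
    rw [e2, Complex.norm_add_mul_I]
    rw [show (t-d)^2 + (ε*s)^2 = v^2 by nlinarith]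
    rw [Real.sqrt_sq hvpos.le]
    field_simp
  · have e : (P + (Q - P) * z₀ / (d : ℂ) - P) * conj (Q - P)
        = ((d : ℝ) : ℂ) * z₀ := by
      rw [add_sub_cancel_left, div_mul_eq_mul_div, mul_right_comm, Complex.mul_conj]
      have h' : (Complex.normSq (Q - P) : ℂ) = ((d^2 : ℝ) : ℂ) := by
        rw [← Complex.sq_norm, hQP]
      rw [h']
      push_cast
      field_simp
    rw [e]
    have : (((d : ℝ) : ℂ) * z₀).im = d * (ε * s) := by
      rw [hz₀]
      simp [Complex.mul_im]
    rw [this]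
    have : ε * (d * (ε * s)) = d * s * ε^2 := by ring
    rw [this, hε2]
    nlinarith

private lemma not_collinear_of_ai {A : Fin 4 → EuclideanSpace ℝ (Fin 3)}
    (h : AffineIndependent ℝ A) (i j k : Fin 4) (hij : i ≠ j) (hik : i ≠ k) (hjk : j ≠ k) :
    ¬ Collinear ℝ ({A i, A j, A k} : Set (EuclideanSpace ℝ (Fin 3))) := by
  rw [← affineIndependent_iff_not_collinear_set]
  have hinj : Function.Injective ![i, j, k] := by
    intro a b hab
    fin_cases a <;> fin_cases b <;> simp_all
  have he : ![A i, A j, A k] = A ∘ (⟨![i, j, k], hinj⟩ : Fin 3 ↪ Fin 4) := by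
    funext x
    fin_cases x <;> rfl
  rw [he]
  exact h.comp_embedding _

private lemma tri_strict {A : Fin 4 → EuclideanSpace ℝ (Fin 3)}
    (h : AffineIndependent ℝ A) (i j k : Fin 4) (hij : i ≠ j) (hik : i ≠ k) (hjk : j ≠ k) :
    dist (A i) (A k) < dist (A i) (A j) + dist (A j) (A k) := by
  have hnc := not_collinear_of_ai h i j k hij hik hjk
  rcases lt_or_eq_of_le (dist_triangle (A i) (A j) (A k)) with hlt | heq
  · exact hlt
  · exfalso
    exact hnc (dist_add_dist_eq_iff.1 heq.symm).collinear

/-- The backward direction key: in an isosceles tetrahedron the cone angle at `a` is `π`. -/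
private lemma cone_eq_pi {a b c d : EuclideanSpace ℝ (Fin 3)}
    (hdc : d ≠ c) (hbc : b ≠ c)
    (h1 : dist a b = dist c d) (h2 : dist a c = dist b d) (h3 : dist a d = dist b c) :
    EuclideanGeometry.angle b a c + EuclideanGeometry.angle b a d
      + EuclideanGeometry.angle c a d = Real.pi := by
  have e1 : EuclideanGeometry.angle b a c = EuclideanGeometry.angle c d b := by
    apply sss_pts
    · rw [dist_comm b a]; exact h1
    · rw [dist_comm c a]; exact h2
    · exact dist_comm b c
  have e2 : EuclideanGeometry.angle b a d = EuclideanGeometry.angle d c b := by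
    apply sss_pts
    · rw [dist_comm b a, dist_comm d c]; exact h1
    · rw [dist_comm d a]; exact h3
    · exact dist_comm b d
  have e3 : EuclideanGeometry.angle c a d = EuclideanGeometry.angle d b c := by
    apply sss_pts
    · rw [dist_comm c a, dist_comm d b]; exact h2
    · rw [dist_comm d a, dist_comm c b]; exact h3
    · exact dist_comm c d
  have hsum := EuclideanGeometry.angle_add_angle_add_angle_eq_pi (p₁ := c) (p₂ := d) b
    hdc
  rw [EuclideanGeometry.angle_comm d c b] at e2
  linarith [hsum, e1, e2, e3, EuclideanGeometry.angle_comm b c d]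
/-- A tetrahedron has all four cone angles equal to `π` iff opposite edges have equal
lengths, i.e. it is isosceles (a disphenoid). -/
theorem stmt_14 (A : Fin 4 → EuclideanSpace ℝ (Fin 3)) (h : AffineIndependent ℝ A) :
    (∀ i j k l : Fin 4, ({i, j, k, l} : Finset (Fin 4)) = Finset.univ →
      EuclideanGeometry.angle (A j) (A i) (A k) +
      EuclideanGeometry.angle (A j) (A i) (A l) +
      EuclideanGeometry.angle (A k) (A i) (A l) = Real.pi) ↔
    (dist (A 0) (A 1) = dist (A 2) (A 3) ∧
     dist (A 0) (A 2) = dist (A 1) (A 3) ∧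
     dist (A 0) (A 3) = dist (A 1) (A 2)) := by
  have hinj : Function.Injective A := h.injective
  have hne : ∀ p q : Fin 4, p ≠ q → A p ≠ A q := fun p q hpq he => hpq (hinj he)
  constructor
  · intro hc
    -- distances are positive
    have h01 : 0 < dist (A 0) (A 1) := dist_pos.2 (hne 0 1 (by decide))
    have h02 : 0 < dist (A 0) (A 2) := dist_pos.2 (hne 0 2 (by decide))
    have h03 : 0 < dist (A 0) (A 3) := dist_pos.2 (hne 0 3 (by decide))
    have h12 : 0 < dist (A 1) (A 2) := dist_pos.2 (hne 1 2 (by decide))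
    have h13 : 0 < dist (A 1) (A 3) := dist_pos.2 (hne 1 3 (by decide))
    have h23 : 0 < dist (A 2) (A 3) := dist_pos.2 (hne 2 3 (by decide))
    set C' : ℂ := ((dist (A 1) (A 2) : ℝ) : ℂ) with hC'def
    have hdC0 : dist (0 : ℂ) C' = dist (A 1) (A 2) := by
      rw [Complex.dist_eq, zero_sub, norm_neg, hC'def, Complex.norm_real,
        Real.norm_of_nonneg h12.le]
    have h0C : (0 : ℂ) ≠ C' := dist_pos.1 (by rw [hdC0]; exact h12)
    -- place the planar image a1 of the apex, unfolded across edge BC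
    obtain ⟨a1, ha1P, ha1Q, ha1s⟩ := construct_pt 0 C' (dist (A 0) (A 1)) (dist (A 0) (A 2))
      (-1) (Or.inr rfl) h0C
      (by rw [hdC0]
          have := tri_strict h 1 0 2 (by decide) (by decide) (by decide)
          linarith [dist_comm (A 1) (A 0)])
      (by rw [hdC0]
          have := tri_strict h 0 2 1 (by decide) (by decide) (by decide)
          linarith [dist_comm (A 2) (A 1)])
      (by rw [hdC0]
          have := tri_strict h 0 1 2 (by decide) (by decide) (by decide)
          linarith)
    -- place the planar base vertex d' (image of D)
    obtain ⟨d', hdP, hdQ, hds⟩ := construct_pt 0 C' (dist (A 1) (A 3)) (dist (A 2) (A 3))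
      1 (Or.inl rfl) h0C
      (by rw [hdC0]
          have := tri_strict h 1 3 2 (by decide) (by decide) (by decide)
          linarith [dist_comm (A 3) (A 2)])
      (by rw [hdC0]
          have := tri_strict h 1 2 3 (by decide) (by decide) (by decide)
          linarith)
      (by rw [hdC0]
          have := tri_strict h 2 1 3 (by decide) (by decide) (by decide)
          linarith [dist_comm (A 2) (A 1)])
    have hdCD : dist C' d' = dist (A 2) (A 3) := by rw [dist_comm]; exact hdQ
    have hCneD : C' ≠ d' := dist_pos.1 (by rw [hdCD]; exact h23)
    -- place a2, unfolded across edge CD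
    obtain ⟨a2, ha2P, ha2Q, ha2s⟩ := construct_pt C' d' (dist (A 0) (A 2)) (dist (A 0) (A 3))
      (-1) (Or.inr rfl) hCneD
      (by rw [hdCD]
          have := tri_strict h 2 0 3 (by decide) (by decide) (by decide)
          linarith [dist_comm (A 2) (A 0)])
      (by rw [hdCD]
          have := tri_strict h 0 3 2 (by decide) (by decide) (by decide)
          linarith [dist_comm (A 3) (A 2)])
      (by rw [hdCD]
          have := tri_strict h 0 2 3 (by decide) (by decide) (by decide)
          linarith)
    have hdBD : dist (0 : ℂ) d' = dist (A 1) (A 3) := by rw [dist_comm]; exact hdP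
    have h0neD : (0 : ℂ) ≠ d' := dist_pos.1 (by rw [hdBD]; exact h13)
    -- place a3, unfolded across edge BD
    obtain ⟨a3, ha3P, ha3Q, ha3s⟩ := construct_pt 0 d' (dist (A 0) (A 1)) (dist (A 0) (A 3))
      1 (Or.inl rfl) h0neD
      (by rw [hdBD]
          have := tri_strict h 1 0 3 (by decide) (by decide) (by decide)
          linarith [dist_comm (A 1) (A 0)])
      (by rw [hdBD]
          have := tri_strict h 0 3 1 (by decide) (by decide) (by decide)
          linarith [dist_comm (A 3) (A 1)])
      (by rw [hdBD]
          have := tri_strict h 0 1 3 (by decide) (by decide) (by decide)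
          linarith)
    -- nonzero vectors
    have hva1 : a1 ≠ 0 := dist_pos.1 (by rw [ha1P]; exact h01)
    have hva3 : a3 ≠ 0 := dist_pos.1 (by rw [ha3P]; exact h01)
    have hvC : C' ≠ 0 := h0C.symm
    have hvd : d' ≠ 0 := h0neD.symm
    have hva1C : a1 - C' ≠ 0 := sub_ne_zero.2 (dist_pos.1 (by rw [ha1Q]; exact h02))
    have hva2C : a2 - C' ≠ 0 := sub_ne_zero.2 (dist_pos.1 (by rw [ha2P]; exact h02))
    have hva2d : a2 - d' ≠ 0 := sub_ne_zero.2 (dist_pos.1 (by rw [ha2Q]; exact h03))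
    have hva3d : a3 - d' ≠ 0 := sub_ne_zero.2 (dist_pos.1 (by rw [ha3Q]; exact h03))
    have hvCd : C' - d' ≠ 0 := sub_ne_zero.2 hCneD
    have hvdC : d' - C' ≠ 0 := sub_ne_zero.2 hCneD.symm
    -- raw side conditions
    have F1 : (a1 * conj C').im < 0 := by
      have := ha1s; rw [sub_zero, sub_zero] at this; linarith
    have F2 : 0 < (d' * conj C').im := by
      have := hds; rw [sub_zero, sub_zero] at this; linarith
    have F3 : ((a2 - C') * conj (d' - C')).im < 0 := by linarith [ha2s]
    have F4 : 0 < (a3 * conj d').im := by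
      have := ha3s; rw [sub_zero, sub_zero] at this; linarith
    simp only [Complex.mul_im, Complex.mul_re, Complex.conj_re, Complex.conj_im,
      Complex.sub_re, Complex.sub_im, Complex.ofReal_re, Complex.ofReal_im,
      mul_zero, zero_mul, mul_neg, neg_zero, sub_zero, zero_sub, add_zero, zero_add,
      neg_neg] at F1 F2 F3 F4
    -- abs facts
    have habsC : ‖C'‖ = dist (A 1) (A 2) := by
      rw [hC'def, Complex.norm_real, Real.norm_of_nonneg h12.le]
    have habs_a1 : ‖a1‖ = dist (A 0) (A 1) := by
      rw [← ha1P, Complex.dist_eq, sub_zero]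
    have habs_a3 : ‖a3‖ = dist (A 0) (A 1) := by
      rw [← ha3P, Complex.dist_eq, sub_zero]
    have habs_d : ‖d'‖ = dist (A 1) (A 3) := by
      rw [← hdP, Complex.dist_eq, sub_zero]
    -- the three angle identifications and fan applications
    -- Vertex B = A 1 (planar point 0)
    have ang1 : EuclideanGeometry.angle (A 0) (A 1) (A 2) = InnerProductGeometry.angle a1 C' := by
      apply angle3d
      · rw [habs_a1]
      · rw [habsC, dist_comm]
      · rw [← Complex.dist_eq]; exact ha1Q.symm
    have ang2 : EuclideanGeometry.angle (A 2) (A 1) (A 3) = InnerProductGeometry.angle C' d' := by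
      apply angle3d
      · rw [habsC, dist_comm]
      · rw [habs_d, dist_comm]
      · rw [← Complex.dist_eq]; exact hdCD.symm
    have ang3 : EuclideanGeometry.angle (A 3) (A 1) (A 0) = InnerProductGeometry.angle d' a3 := by
      apply angle3d
      · rw [habs_d, dist_comm]
      · rw [habs_a3]
      · rw [← Complex.dist_eq, dist_comm d' a3, ha3Q, dist_comm]
    have fanB : a3 = -a1 := by
      apply fan_pos hva1 hvC hvd hva3 ?_ ?_ ?_ ?_ (by rw [habs_a3, habs_a1])
      · simp only [Complex.mul_im, Complex.conj_re, Complex.conj_im, Complex.ofReal_re,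
          Complex.ofReal_im, mul_neg, zero_mul, mul_zero, sub_zero, zero_sub, neg_neg]
        linarith
      · simp only [Complex.mul_im, Complex.conj_re, Complex.conj_im, Complex.ofReal_re,
          Complex.ofReal_im, mul_neg, zero_mul, mul_zero, sub_zero, zero_sub, neg_neg]
        linarith
      · simp only [Complex.mul_im, Complex.conj_re, Complex.conj_im, mul_neg, sub_zero,
          zero_sub, neg_neg]
        linarith
      · have hsum := hc 1 0 2 3 (by decide)
        rw [← ang1, ← ang2, ← ang3, EuclideanGeometry.angle_comm (A 3) (A 1) (A 0)]
        linarith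
    -- Vertex C = A 2 (planar point C')
    have ang4 : EuclideanGeometry.angle (A 0) (A 2) (A 1)
        = InnerProductGeometry.angle (a1 - C') (0 - C') := by
      apply angle3d
      · rw [← Complex.dist_eq]; exact ha1Q.symm
      · rw [zero_sub, norm_neg, habsC, dist_comm]
      · rw [show a1 - C' - (0 - C') = a1 - 0 by ring, ← Complex.dist_eq]; exact ha1P.symm
    have ang5 : EuclideanGeometry.angle (A 1) (A 2) (A 3)
        = InnerProductGeometry.angle (0 - C') (d' - C') := by
      apply angle3d
      · rw [zero_sub, norm_neg, habsC, dist_comm]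
      · rw [← Complex.dist_eq, dist_comm, hdQ, dist_comm]
      · rw [show (0 : ℂ) - C' - (d' - C') = -(d' - 0) by ring, norm_neg,
          ← Complex.dist_eq]
        exact hdP.symm
    have ang6 : EuclideanGeometry.angle (A 3) (A 2) (A 0)
        = InnerProductGeometry.angle (d' - C') (a2 - C') := by
      apply angle3d
      · rw [← Complex.dist_eq, dist_comm, hdQ, dist_comm]
      · rw [← Complex.dist_eq]; exact ha2P.symm
      · rw [show d' - C' - (a2 - C') = -(a2 - d') by ring, norm_neg,
          ← Complex.dist_eq, ha2Q, dist_comm]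
    have hv0C : (0 : ℂ) - C' ≠ 0 := sub_ne_zero.2 h0C
    have hv0d : (0 : ℂ) - d' ≠ 0 := sub_ne_zero.2 h0neD
    have fanC : a2 - C' = -(a1 - C') := by
      apply fan_neg hva1C hv0C hvdC hva2C ?_ ?_ ?_ ?_ ?_
      · simp only [Complex.mul_im, Complex.mul_re, Complex.conj_re, Complex.conj_im,
          Complex.sub_re, Complex.sub_im, Complex.ofReal_re, Complex.ofReal_im,
          Complex.zero_re, Complex.zero_im, Complex.neg_re, Complex.neg_im,
          mul_zero, zero_mul, mul_neg, neg_zero,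
          sub_zero, zero_sub, add_zero, zero_add, neg_neg]
        linarith [F1]
      · simp only [Complex.mul_im, Complex.mul_re, Complex.conj_re, Complex.conj_im,
          Complex.sub_re, Complex.sub_im, Complex.ofReal_re, Complex.ofReal_im,
          Complex.zero_re, Complex.zero_im, Complex.neg_re, Complex.neg_im,
          mul_zero, zero_mul, mul_neg, neg_zero,
          sub_zero, zero_sub, add_zero, zero_add, neg_neg]
        linarith [F2]
      · simp only [Complex.mul_im, Complex.mul_re, Complex.conj_re, Complex.conj_im,
          Complex.sub_re, Complex.sub_im, Complex.ofReal_re, Complex.ofReal_im,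
          Complex.zero_re, Complex.zero_im, Complex.neg_re, Complex.neg_im,
          mul_zero, zero_mul, mul_neg, neg_zero,
          sub_zero, zero_sub, add_zero, zero_add, neg_neg]
        linarith [F3]
      · have hsum := hc 2 0 1 3 (by decide)
        rw [← ang4, ← ang5, ← ang6, EuclideanGeometry.angle_comm (A 3) (A 2) (A 0)]
        linarith
      · rw [← Complex.dist_eq, ← Complex.dist_eq, ha2P, ha1Q]
    -- Vertex D = A 3 (planar point d')
    have ang7 : EuclideanGeometry.angle (A 0) (A 3) (A 1)
        = InnerProductGeometry.angle (a3 - d') (0 - d') := by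
      apply angle3d
      · rw [← Complex.dist_eq]; exact ha3Q.symm
      · rw [zero_sub, norm_neg, habs_d, dist_comm]
      · rw [show a3 - d' - (0 - d') = a3 - 0 by ring, ← Complex.dist_eq]; exact ha3P.symm
    have ang8 : EuclideanGeometry.angle (A 1) (A 3) (A 2)
        = InnerProductGeometry.angle (0 - d') (C' - d') := by
      apply angle3d
      · rw [zero_sub, norm_neg, habs_d, dist_comm]
      · rw [← Complex.dist_eq, hdCD, dist_comm]
      · rw [show (0 : ℂ) - d' - (C' - d') = -(C' - 0) by ring, norm_neg,
          ← Complex.dist_eq, Complex.dist_eq, sub_zero, habsC]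
    have ang9 : EuclideanGeometry.angle (A 2) (A 3) (A 0)
        = InnerProductGeometry.angle (C' - d') (a2 - d') := by
      apply angle3d
      · rw [← Complex.dist_eq, hdCD, dist_comm]
      · rw [← Complex.dist_eq]; exact ha2Q.symm
      · rw [show C' - d' - (a2 - d') = -(a2 - C') by ring, norm_neg,
          ← Complex.dist_eq, ha2P, dist_comm]
    have fanD : a2 - d' = -(a3 - d') := by
      apply fan_pos hva3d hv0d hvCd hva2d ?_ ?_ ?_ ?_ ?_
      · simp only [Complex.mul_im, Complex.mul_re, Complex.conj_re, Complex.conj_im,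
          Complex.sub_re, Complex.sub_im, Complex.ofReal_re, Complex.ofReal_im,
          Complex.zero_re, Complex.zero_im, Complex.neg_re, Complex.neg_im,
          mul_zero, zero_mul, mul_neg, neg_zero,
          sub_zero, zero_sub, add_zero, zero_add, neg_neg]
        linarith [F4]
      · simp only [Complex.mul_im, Complex.mul_re, Complex.conj_re, Complex.conj_im,
          Complex.sub_re, Complex.sub_im, Complex.ofReal_re, Complex.ofReal_im,
          Complex.zero_re, Complex.zero_im, Complex.neg_re, Complex.neg_im,
          mul_zero, zero_mul, mul_neg, neg_zero,
          sub_zero, zero_sub, add_zero, zero_add, neg_neg]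
        linarith [F2]
      · simp only [Complex.mul_im, Complex.mul_re, Complex.conj_re, Complex.conj_im,
          Complex.sub_re, Complex.sub_im, Complex.ofReal_re, Complex.ofReal_im,
          Complex.zero_re, Complex.zero_im, Complex.neg_re, Complex.neg_im,
          mul_zero, zero_mul, mul_neg, neg_zero,
          sub_zero, zero_sub, add_zero, zero_add, neg_neg]
        linarith [F3]
      · have hsum := hc 3 0 1 2 (by decide)
        rw [← ang7, ← ang8, ← ang9, EuclideanGeometry.angle_comm (A 2) (A 3) (A 0)]
        linarith
      · rw [← Complex.dist_eq, ← Complex.dist_eq, ha2Q, ha3Q]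
    have hK : C' - d' = a1 := by
      linear_combination (-1/2 : ℂ) * fanC + (1/2 : ℂ) * fanD + (-1/2 : ℂ) * fanB
    refine ⟨?_, ?_, ?_⟩
    · calc dist (A 0) (A 1) = dist a1 0 := ha1P.symm
        _ = dist d' C' := by
          rw [Complex.dist_eq, Complex.dist_eq, sub_zero,
            show d' - C' = -a1 by linear_combination -hK, norm_neg]
        _ = dist (A 2) (A 3) := hdQ
    · calc dist (A 0) (A 2) = dist a1 C' := ha1Q.symm
        _ = dist d' 0 := by
          rw [Complex.dist_eq, Complex.dist_eq, sub_zero,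
            show a1 - C' = -d' by linear_combination -hK, norm_neg]
        _ = dist (A 1) (A 3) := hdP
    · calc dist (A 0) (A 3) = dist a3 d' := ha3Q.symm
        _ = dist (0 : ℂ) C' := by
          rw [Complex.dist_eq, Complex.dist_eq, zero_sub,
            show a3 - d' = -C' by linear_combination fanB + hK, norm_neg]
        _ = dist (A 1) (A 2) := hdC0
  · rintro ⟨hd1, hd2, hd3⟩ i j k l huniv
    have h4 : ∀ x : Fin 4, x = 0 ∨ x = 1 ∨ x = 2 ∨ x = 3 := by decide
    rcases h4 i with rfl | rfl | rfl | rfl <;> rcases h4 j with rfl | rfl | rfl | rfl <;>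
      rcases h4 k with rfl | rfl | rfl | rfl <;> rcases h4 l with rfl | rfl | rfl | rfl <;>
      first
        | exact absurd huniv (by decide)
        | (refine cone_eq_pi (hne _ _ (by decide)) (hne _ _ (by decide)) ?_ ?_ ?_ <;>
            linarith [hd1, hd2, hd3, dist_comm (A 0) (A 1), dist_comm (A 0) (A 2),
              dist_comm (A 0) (A 3), dist_comm (A 1) (A 2), dist_comm (A 1) (A 3),
              dist_comm (A 2) (A 3)])
end

section
/- For every acute triangle T in the plane, there exists a tetrahedron in ℝ³ all four of whose faces are congruent to T; moreover all four cone angles of this tetrahedron equal π. -/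
open EuclideanGeometry

theorem sss_aux {V P V' P' : Type*} [NormedAddCommGroup V] [InnerProductSpace ℝ V]
    [MetricSpace P] [NormedAddTorsor V P] [NormedAddCommGroup V'] [InnerProductSpace ℝ V']
    [MetricSpace P'] [NormedAddTorsor V' P']
    {p1 p2 p3 : P} {q1 q2 q3 : P'}
    (h12 : dist p1 p2 = dist q1 q2) (h13 : dist p1 p3 = dist q1 q3)
    (h23 : dist p2 p3 = dist q2 q3) (h2 : p1 ≠ p2) (h3 : p1 ≠ p3) :
    EuclideanGeometry.angle p2 p1 p3 = EuclideanGeometry.angle q2 q1 q3 := by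
  have L1 := EuclideanGeometry.dist_sq_eq_dist_sq_add_dist_sq_sub_two_mul_dist_mul_dist_mul_cos_angle p2 p1 p3
  have L2 := EuclideanGeometry.dist_sq_eq_dist_sq_add_dist_sq_sub_two_mul_dist_mul_dist_mul_cos_angle q2 q1 q3
  rw [dist_comm p2 p1, dist_comm p3 p1] at L1
  rw [dist_comm q2 q1, dist_comm q3 q1] at L2
  have hd2 : 0 < dist p1 p2 := dist_pos.mpr h2
  have hd3 : 0 < dist p1 p3 := dist_pos.mpr h3
  have hc : Real.cos (EuclideanGeometry.angle p2 p1 p3) = Real.cos (EuclideanGeometry.angle q2 q1 q3) := by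
    apply mul_left_cancel₀ (a := 2 * dist p1 p2 * dist p1 p3) (by positivity)
    rw [h12, h13, h23] at L1
    rw [h12, h13]
    linarith [L1, L2]
  exact Real.injOn_cos ⟨EuclideanGeometry.angle_nonneg _ _ _, EuclideanGeometry.angle_le_pi _ _ _⟩
    ⟨EuclideanGeometry.angle_nonneg _ _ _, EuclideanGeometry.angle_le_pi _ _ _⟩ hc

def perm3 (v w : Fin 3 → Fin 3) (h1 : ∀ i, w (v i) = i) (h2 : ∀ i, v (w i) = i) :
    Equiv.Perm (Fin 3) := ⟨v, w, h1, h2⟩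
def p012 : Equiv.Perm (Fin 3) := perm3 ![0,1,2] ![0,1,2] (by decide) (by decide)
def p102 : Equiv.Perm (Fin 3) := perm3 ![1,0,2] ![1,0,2] (by decide) (by decide)
def p021 : Equiv.Perm (Fin 3) := perm3 ![0,2,1] ![0,2,1] (by decide) (by decide)
def p210 : Equiv.Perm (Fin 3) := perm3 ![2,1,0] ![2,1,0] (by decide) (by decide)
def p120 : Equiv.Perm (Fin 3) := perm3 ![1,2,0] ![2,0,1] (by decide) (by decide)
def p201 : Equiv.Perm (Fin 3) := perm3 ![2,0,1] ![1,2,0] (by decide) (by decide)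

set_option maxHeartbeats 1000000 in
/-- For every acute triangle `t` in the plane there exists a tetrahedron all four of whose
faces are congruent to `t`; all four cone angles of this tetrahedron equal `π`. -/
theorem stmt_15 (t : Fin 3 → EuclideanSpace ℝ (Fin 2)) (ht : AffineIndependent ℝ t)
    (hacute : EuclideanGeometry.angle (t 1) (t 0) (t 2) < Real.pi / 2 ∧
              EuclideanGeometry.angle (t 0) (t 1) (t 2) < Real.pi / 2 ∧
              EuclideanGeometry.angle (t 0) (t 2) (t 1) < Real.pi / 2) :
    ∃ A : Fin 4 → EuclideanSpace ℝ (Fin 3), AffineIndependent ℝ A ∧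
      (∀ i j k l : Fin 4, ({i, j, k, l} : Finset (Fin 4)) = Finset.univ →
        ∃ σ : Equiv.Perm (Fin 3),
          dist (A j) (A k) = dist (t (σ 0)) (t (σ 1)) ∧
          dist (A j) (A l) = dist (t (σ 0)) (t (σ 2)) ∧
          dist (A k) (A l) = dist (t (σ 1)) (t (σ 2))) ∧
      (∀ i j k l : Fin 4, ({i, j, k, l} : Finset (Fin 4)) = Finset.univ →
        EuclideanGeometry.angle (A j) (A i) (A k) +
        EuclideanGeometry.angle (A j) (A i) (A l) +
        EuclideanGeometry.angle (A k) (A i) (A l) = Real.pi) := by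
  obtain ⟨hA', hB', hC'⟩ := hacute
  have htinj := ht.injective
  have t01 : t 0 ≠ t 1 := fun h => absurd (htinj h) (by decide)
  have t02 : t 0 ≠ t 2 := fun h => absurd (htinj h) (by decide)
  have t12 : t 1 ≠ t 2 := fun h => absurd (htinj h) (by decide)
  have ha0 : 0 < dist (t 1) (t 2) := dist_pos.mpr t12
  have hb0 : 0 < dist (t 0) (t 2) := dist_pos.mpr t02
  have hc0 : 0 < dist (t 0) (t 1) := dist_pos.mpr t01
  have pi_pos := Real.pi_pos
  have cosA : 0 < Real.cos (EuclideanGeometry.angle (t 1) (t 0) (t 2)) :=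
    Real.cos_pos_of_mem_Ioo ⟨by linarith [EuclideanGeometry.angle_nonneg (t 1) (t 0) (t 2)], hA'⟩
  have cosB : 0 < Real.cos (EuclideanGeometry.angle (t 0) (t 1) (t 2)) :=
    Real.cos_pos_of_mem_Ioo ⟨by linarith [EuclideanGeometry.angle_nonneg (t 0) (t 1) (t 2)], hB'⟩
  have cosC : 0 < Real.cos (EuclideanGeometry.angle (t 0) (t 2) (t 1)) :=
    Real.cos_pos_of_mem_Ioo ⟨by linarith [EuclideanGeometry.angle_nonneg (t 0) (t 2) (t 1)], hC'⟩
  have L1 := EuclideanGeometry.dist_sq_eq_dist_sq_add_dist_sq_sub_two_mul_dist_mul_dist_mul_cos_angle (t 1) (t 0) (t 2)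
  rw [dist_comm (t 1) (t 0), dist_comm (t 2) (t 0)] at L1
  have L2 := EuclideanGeometry.dist_sq_eq_dist_sq_add_dist_sq_sub_two_mul_dist_mul_dist_mul_cos_angle (t 0) (t 1) (t 2)
  rw [dist_comm (t 2) (t 1)] at L2
  have L3 := EuclideanGeometry.dist_sq_eq_dist_sq_add_dist_sq_sub_two_mul_dist_mul_dist_mul_cos_angle (t 0) (t 2) (t 1)
  have hxp : 0 < (dist (t 0) (t 2)^2 + dist (t 0) (t 1)^2 - dist (t 1) (t 2)^2)/8 := by
    nlinarith [L1, mul_pos (mul_pos hc0 hb0) cosA]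
  have hyp : 0 < (dist (t 1) (t 2)^2 + dist (t 0) (t 1)^2 - dist (t 0) (t 2)^2)/8 := by
    nlinarith [L2, mul_pos (mul_pos hc0 ha0) cosB]
  have hzp : 0 < (dist (t 1) (t 2)^2 + dist (t 0) (t 2)^2 - dist (t 0) (t 1)^2)/8 := by
    nlinarith [L3, mul_pos (mul_pos hb0 ha0) cosC]
  obtain ⟨x, hx, hx2⟩ : ∃ x : ℝ, 0 < x ∧ x^2 = (dist (t 0) (t 2)^2 + dist (t 0) (t 1)^2 - dist (t 1) (t 2)^2)/8 :=
    ⟨Real.sqrt _, Real.sqrt_pos.mpr hxp, Real.sq_sqrt hxp.le⟩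
  obtain ⟨y, hy, hy2⟩ : ∃ y : ℝ, 0 < y ∧ y^2 = (dist (t 1) (t 2)^2 + dist (t 0) (t 1)^2 - dist (t 0) (t 2)^2)/8 :=
    ⟨Real.sqrt _, Real.sqrt_pos.mpr hyp, Real.sq_sqrt hyp.le⟩
  obtain ⟨z, hz, hz2⟩ : ∃ z : ℝ, 0 < z ∧ z^2 = (dist (t 1) (t 2)^2 + dist (t 0) (t 2)^2 - dist (t 0) (t 1)^2)/8 :=
    ⟨Real.sqrt _, Real.sqrt_pos.mpr hzp, Real.sq_sqrt hzp.le⟩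
  set A : Fin 4 → EuclideanSpace ℝ (Fin 3) :=
    ![!₂[x, y, z], !₂[x, -y, -z], !₂[-x, y, -z], !₂[-x, -y, z]] with hAdef
  have dcalc : ∀ p q : EuclideanSpace ℝ (Fin 3),
      dist p q = Real.sqrt ((p 0 - q 0)^2 + (p 1 - q 1)^2 + (p 2 - q 2)^2) := by
    intro p q
    rw [EuclideanSpace.dist_eq, Fin.sum_univ_three]
    simp [Real.dist_eq, sq_abs]
  have dA01 : dist (A 0) (A 1) = dist (t 1) (t 2) := by
    rw [dcalc, show ((A 0) 0 - (A 1) 0)^2 + ((A 0) 1 - (A 1) 1)^2 + ((A 0) 2 - (A 1) 2)^2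
        = (dist (t 1) (t 2))^2 from by norm_num [hAdef, Matrix.cons_val_three, Matrix.cons_val_two, Matrix.tail_cons, Matrix.head_cons]; linear_combination 4*hy2 + 4*hz2]
    exact Real.sqrt_sq dist_nonneg
  have dA10 : dist (A 1) (A 0) = dist (t 1) (t 2) := (dist_comm (A 1) (A 0)).trans dA01
  have dA23 : dist (A 2) (A 3) = dist (t 1) (t 2) := by
    rw [dcalc, show ((A 2) 0 - (A 3) 0)^2 + ((A 2) 1 - (A 3) 1)^2 + ((A 2) 2 - (A 3) 2)^2
        = (dist (t 1) (t 2))^2 from by norm_num [hAdef, Matrix.cons_val_three, Matrix.cons_val_two, Matrix.tail_cons, Matrix.head_cons]; linear_combination 4*hy2 + 4*hz2]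
    exact Real.sqrt_sq dist_nonneg
  have dA32 : dist (A 3) (A 2) = dist (t 1) (t 2) := (dist_comm (A 3) (A 2)).trans dA23
  have dA02 : dist (A 0) (A 2) = dist (t 0) (t 2) := by
    rw [dcalc, show ((A 0) 0 - (A 2) 0)^2 + ((A 0) 1 - (A 2) 1)^2 + ((A 0) 2 - (A 2) 2)^2
        = (dist (t 0) (t 2))^2 from by norm_num [hAdef, Matrix.cons_val_three, Matrix.cons_val_two, Matrix.tail_cons, Matrix.head_cons]; linear_combination 4*hx2 + 4*hz2]
    exact Real.sqrt_sq dist_nonneg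
  have dA20 : dist (A 2) (A 0) = dist (t 0) (t 2) := (dist_comm (A 2) (A 0)).trans dA02
  have dA13 : dist (A 1) (A 3) = dist (t 0) (t 2) := by
    rw [dcalc, show ((A 1) 0 - (A 3) 0)^2 + ((A 1) 1 - (A 3) 1)^2 + ((A 1) 2 - (A 3) 2)^2
        = (dist (t 0) (t 2))^2 from by norm_num [hAdef, Matrix.cons_val_three, Matrix.cons_val_two, Matrix.tail_cons, Matrix.head_cons]; linear_combination 4*hx2 + 4*hz2]
    exact Real.sqrt_sq dist_nonneg
  have dA31 : dist (A 3) (A 1) = dist (t 0) (t 2) := (dist_comm (A 3) (A 1)).trans dA13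
  have dA03 : dist (A 0) (A 3) = dist (t 0) (t 1) := by
    rw [dcalc, show ((A 0) 0 - (A 3) 0)^2 + ((A 0) 1 - (A 3) 1)^2 + ((A 0) 2 - (A 3) 2)^2
        = (dist (t 0) (t 1))^2 from by norm_num [hAdef, Matrix.cons_val_three, Matrix.cons_val_two, Matrix.tail_cons, Matrix.head_cons]; linear_combination 4*hx2 + 4*hy2]
    exact Real.sqrt_sq dist_nonneg
  have dA30 : dist (A 3) (A 0) = dist (t 0) (t 1) := (dist_comm (A 3) (A 0)).trans dA03
  have dA12 : dist (A 1) (A 2) = dist (t 0) (t 1) := by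
    rw [dcalc, show ((A 1) 0 - (A 2) 0)^2 + ((A 1) 1 - (A 2) 1)^2 + ((A 1) 2 - (A 2) 2)^2
        = (dist (t 0) (t 1))^2 from by norm_num [hAdef, Matrix.cons_val_three, Matrix.cons_val_two, Matrix.tail_cons, Matrix.head_cons]; linear_combination 4*hx2 + 4*hy2]
    exact Real.sqrt_sq dist_nonneg
  have dA21 : dist (A 2) (A 1) = dist (t 0) (t 1) := (dist_comm (A 2) (A 1)).trans dA12
  have n01 : A 0 ≠ A 1 := by rw [← dist_pos, dA01]; exact dist_pos.mpr t12
  have n10 : A 1 ≠ A 0 := n01.symm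
  have n23 : A 2 ≠ A 3 := by rw [← dist_pos, dA23]; exact dist_pos.mpr t12
  have n32 : A 3 ≠ A 2 := n23.symm
  have n02 : A 0 ≠ A 2 := by rw [← dist_pos, dA02]; exact dist_pos.mpr t02
  have n20 : A 2 ≠ A 0 := n02.symm
  have n13 : A 1 ≠ A 3 := by rw [← dist_pos, dA13]; exact dist_pos.mpr t02
  have n31 : A 3 ≠ A 1 := n13.symm
  have n03 : A 0 ≠ A 3 := by rw [← dist_pos, dA03]; exact dist_pos.mpr t01
  have n30 : A 3 ≠ A 0 := n03.symm
  have n12 : A 1 ≠ A 2 := by rw [← dist_pos, dA12]; exact dist_pos.mpr t01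
  have n21 : A 2 ≠ A 1 := n12.symm
  have g102 : EuclideanGeometry.angle (A 1) (A 0) (A 2) = EuclideanGeometry.angle (t 0) (t 2) (t 1) :=
    (sss_aux (p1 := A 0) (q1 := t 2) (dA01.trans (dist_comm (t 1) (t 2))) (dA02.trans (dist_comm (t 0) (t 2))) (dA12.trans (dist_comm (t 0) (t 1))) n01 n02).trans (EuclideanGeometry.angle_comm (t 1) (t 2) (t 0))
  have g201 : EuclideanGeometry.angle (A 2) (A 0) (A 1) = EuclideanGeometry.angle (t 0) (t 2) (t 1) :=
    (EuclideanGeometry.angle_comm (A 2) (A 0) (A 1)).trans g102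
  have g103 : EuclideanGeometry.angle (A 1) (A 0) (A 3) = EuclideanGeometry.angle (t 0) (t 1) (t 2) :=
    (sss_aux (p1 := A 0) (q1 := t 1) dA01 (dA03.trans (dist_comm (t 0) (t 1))) (dA13.trans (dist_comm (t 0) (t 2))) n01 n03).trans (EuclideanGeometry.angle_comm (t 2) (t 1) (t 0))
  have g301 : EuclideanGeometry.angle (A 3) (A 0) (A 1) = EuclideanGeometry.angle (t 0) (t 1) (t 2) :=
    (EuclideanGeometry.angle_comm (A 3) (A 0) (A 1)).trans g103
  have g203 : EuclideanGeometry.angle (A 2) (A 0) (A 3) = EuclideanGeometry.angle (t 1) (t 0) (t 2) :=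
    (sss_aux (p1 := A 0) (q1 := t 0) dA02 dA03 (dA23.trans (dist_comm (t 1) (t 2))) n02 n03).trans (EuclideanGeometry.angle_comm (t 2) (t 0) (t 1))
  have g302 : EuclideanGeometry.angle (A 3) (A 0) (A 2) = EuclideanGeometry.angle (t 1) (t 0) (t 2) :=
    (EuclideanGeometry.angle_comm (A 3) (A 0) (A 2)).trans g203
  have g012 : EuclideanGeometry.angle (A 0) (A 1) (A 2) = EuclideanGeometry.angle (t 0) (t 1) (t 2) :=
    (sss_aux (p1 := A 1) (q1 := t 1) dA10 (dA12.trans (dist_comm (t 0) (t 1))) (dA02.trans (dist_comm (t 0) (t 2))) n10 n12).trans (EuclideanGeometry.angle_comm (t 2) (t 1) (t 0))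
  have g210 : EuclideanGeometry.angle (A 2) (A 1) (A 0) = EuclideanGeometry.angle (t 0) (t 1) (t 2) :=
    (EuclideanGeometry.angle_comm (A 2) (A 1) (A 0)).trans g012
  have g013 : EuclideanGeometry.angle (A 0) (A 1) (A 3) = EuclideanGeometry.angle (t 0) (t 2) (t 1) :=
    (sss_aux (p1 := A 1) (q1 := t 2) (dA10.trans (dist_comm (t 1) (t 2))) (dA13.trans (dist_comm (t 0) (t 2))) (dA03.trans (dist_comm (t 0) (t 1))) n10 n13).trans (EuclideanGeometry.angle_comm (t 1) (t 2) (t 0))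
  have g310 : EuclideanGeometry.angle (A 3) (A 1) (A 0) = EuclideanGeometry.angle (t 0) (t 2) (t 1) :=
    (EuclideanGeometry.angle_comm (A 3) (A 1) (A 0)).trans g013
  have g213 : EuclideanGeometry.angle (A 2) (A 1) (A 3) = EuclideanGeometry.angle (t 1) (t 0) (t 2) := sss_aux (p1 := A 1) (q1 := t 0) dA12 dA13 dA23 n12 n13
  have g312 : EuclideanGeometry.angle (A 3) (A 1) (A 2) = EuclideanGeometry.angle (t 1) (t 0) (t 2) :=
    (EuclideanGeometry.angle_comm (A 3) (A 1) (A 2)).trans g213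
  have g021 : EuclideanGeometry.angle (A 0) (A 2) (A 1) = EuclideanGeometry.angle (t 1) (t 0) (t 2) :=
    (sss_aux (p1 := A 2) (q1 := t 0) dA20 dA21 (dA01.trans (dist_comm (t 1) (t 2))) n20 n21).trans (EuclideanGeometry.angle_comm (t 2) (t 0) (t 1))
  have g120 : EuclideanGeometry.angle (A 1) (A 2) (A 0) = EuclideanGeometry.angle (t 1) (t 0) (t 2) :=
    (EuclideanGeometry.angle_comm (A 1) (A 2) (A 0)).trans g021
  have g023 : EuclideanGeometry.angle (A 0) (A 2) (A 3) = EuclideanGeometry.angle (t 0) (t 2) (t 1) := sss_aux (p1 := A 2) (q1 := t 2) (dA20.trans (dist_comm (t 0) (t 2))) (dA23.trans (dist_comm (t 1) (t 2))) dA03 n20 n23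
  have g320 : EuclideanGeometry.angle (A 3) (A 2) (A 0) = EuclideanGeometry.angle (t 0) (t 2) (t 1) :=
    (EuclideanGeometry.angle_comm (A 3) (A 2) (A 0)).trans g023
  have g123 : EuclideanGeometry.angle (A 1) (A 2) (A 3) = EuclideanGeometry.angle (t 0) (t 1) (t 2) := sss_aux (p1 := A 2) (q1 := t 1) (dA21.trans (dist_comm (t 0) (t 1))) dA23 dA13 n21 n23
  have g321 : EuclideanGeometry.angle (A 3) (A 2) (A 1) = EuclideanGeometry.angle (t 0) (t 1) (t 2) :=
    (EuclideanGeometry.angle_comm (A 3) (A 2) (A 1)).trans g123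
  have g031 : EuclideanGeometry.angle (A 0) (A 3) (A 1) = EuclideanGeometry.angle (t 1) (t 0) (t 2) := sss_aux (p1 := A 3) (q1 := t 0) dA30 dA31 dA01 n30 n31
  have g130 : EuclideanGeometry.angle (A 1) (A 3) (A 0) = EuclideanGeometry.angle (t 1) (t 0) (t 2) :=
    (EuclideanGeometry.angle_comm (A 1) (A 3) (A 0)).trans g031
  have g032 : EuclideanGeometry.angle (A 0) (A 3) (A 2) = EuclideanGeometry.angle (t 0) (t 1) (t 2) := sss_aux (p1 := A 3) (q1 := t 1) (dA30.trans (dist_comm (t 0) (t 1))) dA32 dA02 n30 n32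
  have g230 : EuclideanGeometry.angle (A 2) (A 3) (A 0) = EuclideanGeometry.angle (t 0) (t 1) (t 2) :=
    (EuclideanGeometry.angle_comm (A 2) (A 3) (A 0)).trans g032
  have g132 : EuclideanGeometry.angle (A 1) (A 3) (A 2) = EuclideanGeometry.angle (t 0) (t 2) (t 1) := sss_aux (p1 := A 3) (q1 := t 2) (dA31.trans (dist_comm (t 0) (t 2))) (dA32.trans (dist_comm (t 1) (t 2))) dA12 n31 n32
  have g231 : EuclideanGeometry.angle (A 2) (A 3) (A 1) = EuclideanGeometry.angle (t 0) (t 2) (t 1) :=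
    (EuclideanGeometry.angle_comm (A 2) (A 3) (A 1)).trans g132
  have t10 : t 1 ≠ t 0 := t01.symm
  have t20 : t 2 ≠ t 0 := t02.symm
  have base := EuclideanGeometry.angle_add_angle_add_angle_eq_pi (p₁ := t 0) (t 2) t10
  rw [EuclideanGeometry.angle_comm (t 1) (t 2) (t 0), EuclideanGeometry.angle_comm (t 2) (t 0) (t 1)] at base
  refine ⟨A, ?_, ?_, ?_⟩
  · rw [affineIndependent_iff_linearIndependent_vsub ℝ _ 0]
    apply (linearIndependent_equiv (⟨fun i => ⟨i.succ, Fin.succ_ne_zero i⟩,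
        fun j => Fin.pred j.1 j.2, by intro i; simp, by intro j; ext; simp⟩ :
        Fin 3 ≃ {i : Fin 4 // i ≠ 0})).mp
    rw [Fintype.linearIndependent_iff]
    intro g hg
    simp only [Function.comp, Equiv.coe_fn_mk, Fin.sum_univ_three] at hg
    have hg' : ∀ c : Fin 3, (g 0 • (A (Fin.succ 0) -ᵥ A 0) + g 1 • (A (Fin.succ 1) -ᵥ A 0)
        + g 2 • (A (Fin.succ 2) -ᵥ A 0)) c = 0 := by
      intro c; rw [hg]; rfl
    have h0 := hg' 0
    have h1 := hg' 1
    have h2 := hg' 2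
    have e1 : Fin.succ (0 : Fin 3) = 1 := rfl
    have e2 : Fin.succ (1 : Fin 3) = 2 := rfl
    have e3 : Fin.succ (2 : Fin 3) = 3 := rfl
    simp only [e1, e2, e3, hAdef, vsub_eq_sub, PiLp.add_apply, PiLp.smul_apply, PiLp.sub_apply,
      smul_eq_mul] at h0 h1 h2
    norm_num [Matrix.cons_val_three, Matrix.cons_val_two, Matrix.tail_cons, Matrix.head_cons] at h0 h1 h2
    have k0 : g 1 + g 2 = 0 := by
      rcases mul_eq_zero.mp (show (g 1 + g 2) * (2*x) = 0 by linear_combination -h0) with h | h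
      · exact h
      · linarith only [hx, h]
    have k1 : g 0 + g 2 = 0 := by
      rcases mul_eq_zero.mp (show (g 0 + g 2) * (2*y) = 0 by linear_combination -h1) with h | h
      · exact h
      · linarith only [hy, h]
    have k2 : g 0 + g 1 = 0 := by
      rcases mul_eq_zero.mp (show (g 0 + g 1) * (2*z) = 0 by linear_combination -h2) with h | h
      · exact h
      · linarith only [hz, h]
    intro i
    fin_cases i
    · show g 0 = 0; linarith only [k0, k1, k2]
    · show g 1 = 0; linarith only [k0, k1, k2]
    · show g 2 = 0; linarith only [k0, k1, k2]
  · intro i j k l h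
    fin_cases i <;> fin_cases j <;> fin_cases k <;> fin_cases l <;>
      first
      | exact absurd h (by decide)
      | (refine ⟨p012, ?_, ?_, ?_⟩ <;> (simp [p012, perm3, Equiv.coe_fn_mk, Matrix.cons_val_zero, Matrix.cons_val_one, Matrix.head_cons, Matrix.cons_val_two, Matrix.tail_cons, dA01, dA10, dA02, dA20, dA03, dA30, dA12, dA21, dA13, dA31, dA23, dA32, dist_comm]; done))
      | (refine ⟨p102, ?_, ?_, ?_⟩ <;> (simp [p102, perm3, Equiv.coe_fn_mk, Matrix.cons_val_zero, Matrix.cons_val_one, Matrix.head_cons, Matrix.cons_val_two, Matrix.tail_cons, dA01, dA10, dA02, dA20, dA03, dA30, dA12, dA21, dA13, dA31, dA23, dA32, dist_comm]; done))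
      | (refine ⟨p021, ?_, ?_, ?_⟩ <;> (simp [p021, perm3, Equiv.coe_fn_mk, Matrix.cons_val_zero, Matrix.cons_val_one, Matrix.head_cons, Matrix.cons_val_two, Matrix.tail_cons, dA01, dA10, dA02, dA20, dA03, dA30, dA12, dA21, dA13, dA31, dA23, dA32, dist_comm]; done))
      | (refine ⟨p210, ?_, ?_, ?_⟩ <;> (simp [p210, perm3, Equiv.coe_fn_mk, Matrix.cons_val_zero, Matrix.cons_val_one, Matrix.head_cons, Matrix.cons_val_two, Matrix.tail_cons, dA01, dA10, dA02, dA20, dA03, dA30, dA12, dA21, dA13, dA31, dA23, dA32, dist_comm]; done))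
      | (refine ⟨p120, ?_, ?_, ?_⟩ <;> (simp [p120, perm3, Equiv.coe_fn_mk, Matrix.cons_val_zero, Matrix.cons_val_one, Matrix.head_cons, Matrix.cons_val_two, Matrix.tail_cons, dA01, dA10, dA02, dA20, dA03, dA30, dA12, dA21, dA13, dA31, dA23, dA32, dist_comm]; done))
      | (refine ⟨p201, ?_, ?_, ?_⟩ <;> (simp [p201, perm3, Equiv.coe_fn_mk, Matrix.cons_val_zero, Matrix.cons_val_one, Matrix.head_cons, Matrix.cons_val_two, Matrix.tail_cons, dA01, dA10, dA02, dA20, dA03, dA30, dA12, dA21, dA13, dA31, dA23, dA32, dist_comm]; done))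
  · intro i j k l h
    fin_cases i <;> fin_cases j <;> fin_cases k <;> fin_cases l <;>
      first
      | exact absurd h (by decide)
      | (simp [g102, g201, g103, g301, g203, g302, g012, g210, g013, g310, g213, g312, g021, g120, g023, g320, g123, g321, g031, g130, g032, g230, g132, g231]; linarith [base])
end
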